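/- arXiv:1010.2371 — 5 statements merged into one kernel-verified Lean document; each statement's English description precedes it below -/
import Mathlib

section
/- Let m be an even positive integer, let S be a nonempty subset of Fin m, and let δ ∈ (0,1]. Let σ be a permutation of Fin m drawn uniformly at random, let H = {t ∈ Fin m : t < m/2} be the set of first-half positions, and let X = |{t ∈ S : σ t ∈ H}|. Then the probability that |X − |S|/2| > δ·|S|/2 is at most 2·exp(−|S|·δ²/6). -/
open scoped Classical

open Finset

-- Key nat inequality: 2^j * K^(j) * (2K-j)! ≤ (2K)!
lemma key_nat (K : ℕ) : ∀ j : ℕ,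
    2 ^ j * (K.descFactorial j * Nat.factorial (2 * K - j)) ≤ Nat.factorial (2 * K) := by
  intro j
  induction j with
  | zero => simp
  | succ j ih =>
    rcases le_or_gt K j with h | h
    · simp [Nat.descFactorial_succ, Nat.sub_eq_zero_of_le h]
    · have h1 : 2 * K - j = (2 * K - (j + 1)) + 1 := by omega
      have h2 : Nat.factorial (2 * K - j)
          = (2 * K - j) * Nat.factorial (2 * K - (j + 1)) := by
        rw [h1, Nat.factorial_succ, ← h1]
      calc 2 ^ (j + 1) * (K.descFactorial (j + 1) * Nat.factorial (2 * K - (j + 1)))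
          = (2 * (K - j)) * (2 ^ j * (K.descFactorial j * Nat.factorial (2 * K - (j + 1)))) := by
            rw [Nat.descFactorial_succ]; ring
        _ ≤ (2 * K - j) * (2 ^ j * (K.descFactorial j * Nat.factorial (2 * K - (j + 1)))) :=
            Nat.mul_le_mul (by omega) le_rfl
        _ = 2 ^ j * (K.descFactorial j * ((2 * K - j) * Nat.factorial (2 * K - (j + 1)))) := by
            ring
        _ = 2 ^ j * (K.descFactorial j * Nat.factorial (2 * K - j)) := by rw [h2]
        _ ≤ Nat.factorial (2 * K) := ih

-- number of permutations fixing every element of T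
lemma fixing_card {m : ℕ} (T : Finset (Fin m)) :
    (Finset.univ.filter (fun π : Equiv.Perm (Fin m) => ∀ t ∈ T, π t = t)).card
      = Nat.factorial (m - T.card) := by
  classical
  have e : {π : Equiv.Perm (Fin m) // ∀ t ∈ T, π t = t} ≃ Equiv.Perm {x : Fin m // x ∉ T} := by
    refine
      { toFun := fun π => π.1.subtypePerm ?_
        invFun := fun e => ⟨e.extendDomain (Equiv.refl _), ?_⟩
        left_inv := ?_
        right_inv := ?_ }
    · intro x
      have hmemiff : x ∈ T ↔ π.1 x ∈ T := by
        constructor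
        · intro hx; rw [π.2 x hx]; exact hx
        · intro hx
          have e := π.1.injective (π.2 _ hx)
          rwa [e] at hx
      exact not_congr hmemiff.symm
    · intro t ht
      exact Equiv.Perm.extendDomain_apply_not_subtype _ _ (by simpa using ht)
    · rintro ⟨π, hπ⟩
      ext x
      by_cases hx : x ∈ T
      · simp only []
        rw [Equiv.Perm.extendDomain_apply_not_subtype _ _ (by simpa using hx), hπ x hx]
      · rw [Equiv.Perm.extendDomain_apply_subtype _ _ (by simpa using hx)]
        rfl
    · intro e
      ext x
      simp only [Equiv.Perm.subtypePerm_apply]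
      rw [Equiv.Perm.extendDomain_apply_subtype _ _ (by simpa using x.2)]
      rfl
  have h1 : (Finset.univ.filter (fun π : Equiv.Perm (Fin m) => ∀ t ∈ T, π t = t)).card
      = Fintype.card {π : Equiv.Perm (Fin m) // ∀ t ∈ T, π t = t} :=
    (Fintype.card_subtype _).symm
  rw [h1, Fintype.card_congr e, Fintype.card_perm]
  congr 1
  rw [Fintype.card_subtype_compl]
  simp [Fintype.card_coe]

-- any injective function on a finset extends to a permutation
lemma exists_extension {m : ℕ} (T : Finset (Fin m)) (f : {x : Fin m // x ∈ T} → Fin m)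
    (hf : Function.Injective f) :
    ∃ σ : Equiv.Perm (Fin m), ∀ t : {x : Fin m // x ∈ T}, σ t = f t := by
  classical
  set Timg : Finset (Fin m) := T.attach.image f with hTimg
  have hcard : Timg.card = T.card := by
    rw [hTimg, Finset.card_image_of_injective _ hf, Finset.card_attach]
  have hg : ∀ t : {x : Fin m // x ∈ T}, f t ∈ Timg :=
    fun t => Finset.mem_image.2 ⟨t, Finset.mem_attach _ _, rfl⟩
  let e1 : {x : Fin m // x ∈ T} ≃ {x : Fin m // x ∈ Timg} :=
    Equiv.ofBijective (fun t => ⟨f t, hg t⟩)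
      ⟨fun a b hab => hf (by simpa using hab),
       by rintro ⟨y, hy⟩
          obtain ⟨t, _, ht⟩ := Finset.mem_image.1 hy
          exact ⟨t, Subtype.ext ht⟩⟩
  have e2 : {x : Fin m // x ∉ T} ≃ {x : Fin m // x ∉ Timg} := by
    apply Fintype.equivOfCardEq
    rw [Fintype.card_subtype_compl, Fintype.card_subtype_compl]
    simp [Fintype.card_coe, hcard]
  refine ⟨(Equiv.sumCompl (fun x => x ∈ T)).symm.trans
    ((e1.sumCongr e2).trans (Equiv.sumCompl (fun x => x ∈ Timg))), ?_⟩
  intro t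
  rw [Equiv.trans_apply, Equiv.trans_apply,
    Equiv.sumCompl_symm_apply_of_pos t.2]
  simp only [Equiv.sumCongr_apply, Sum.map_inl, Equiv.sumCompl_apply_inl]
  rfl

-- number of permutations mapping T into H
lemma count_mapsto {m : ℕ} (T H : Finset (Fin m)) :
    (Finset.univ.filter (fun σ : Equiv.Perm (Fin m) => ∀ t ∈ T, σ t ∈ H)).card
      = H.card.descFactorial T.card * Nat.factorial (m - T.card) := by
  classical
  set A := Finset.univ.filter (fun σ : Equiv.Perm (Fin m) => ∀ t ∈ T, σ t ∈ H) with hA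
  set g : Equiv.Perm (Fin m) → ({x : Fin m // x ∈ T} → Fin m) :=
    fun σ t => σ t with hg
  set B : Finset ({x : Fin m // x ∈ T} → Fin m) :=
    Finset.univ.filter (fun f => Function.Injective f ∧ ∀ t, f t ∈ H) with hB
  have hmaps : ∀ σ ∈ A, g σ ∈ B := by
    intro σ hσ
    rw [hB, Finset.mem_filter]
    refine ⟨Finset.mem_univ _, fun a b hab => Subtype.ext (σ.injective hab), fun t => ?_⟩
    exact (Finset.mem_filter.1 hσ).2 t t.2
  rw [Finset.card_eq_sum_card_fiberwise hmaps]
  have hfiber : ∀ f ∈ B, (A.filter (fun σ => g σ = f)).card = Nat.factorial (m - T.card) := by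
    intro f hf
    obtain ⟨hfinj, hfH⟩ := (Finset.mem_filter.1 hf).2
    have hAf : A.filter (fun σ => g σ = f)
        = Finset.univ.filter (fun σ : Equiv.Perm (Fin m) => g σ = f) := by
      ext σ
      simp only [Finset.mem_filter, hA, Finset.mem_univ, true_and]
      constructor
      · rintro ⟨_, h2⟩; exact h2
      · intro h2
        refine ⟨fun t ht => ?_, h2⟩
        have := congrFun h2 ⟨t, ht⟩
        rw [hg] at this
        simp only at this
        rw [this]
        exact hfH ⟨t, ht⟩
    rw [hAf]
    obtain ⟨σ0, hσ0⟩ := exists_extension T f hfinj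
    rw [← fixing_card T]
    apply Finset.card_bij' (i := fun (σ : Equiv.Perm (Fin m)) _ => σ.trans σ0.symm)
      (j := fun (π : Equiv.Perm (Fin m)) _ => π.trans σ0)
    · intro σ hσ
      have h2 : g σ = f := (Finset.mem_filter.1 hσ).2
      simp only [Finset.mem_filter, Finset.mem_univ, true_and]
      intro t ht
      have : σ t = f ⟨t, ht⟩ := congrFun h2 ⟨t, ht⟩
      simp [Equiv.trans_apply, this, ← hσ0 ⟨t, ht⟩]
    · intro π hπ
      have h2 : ∀ t ∈ T, π t = t := (Finset.mem_filter.1 hπ).2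
      simp only [Finset.mem_filter, Finset.mem_univ, true_and]
      funext t
      rw [hg]
      simp only [Equiv.trans_apply]
      rw [h2 t t.2, hσ0 t]
    · intro σ _
      ext x
      simp
    · intro π _
      ext x
      simp
  rw [Finset.sum_congr rfl hfiber, Finset.sum_const, smul_eq_mul]
  congr 1
  -- B.card = descFactorial
  have hBc : B.card
      = Fintype.card {f : {x : Fin m // x ∈ T} → Fin m //
          Function.Injective f ∧ ∀ t, f t ∈ H} := (Fintype.card_subtype _).symm
  have hEq : {f : {x : Fin m // x ∈ T} → Fin m // Function.Injective f ∧ ∀ t, f t ∈ H}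
      ≃ ({x : Fin m // x ∈ T} ↪ {x : Fin m // x ∈ H}) :=
    { toFun := fun f => ⟨fun t => ⟨f.1 t, f.2.2 t⟩,
        fun a b hab => f.2.1 (congrArg Subtype.val hab)⟩
      invFun := fun e => ⟨fun t => (e t : Fin m),
        ⟨fun a b hab => e.injective (Subtype.ext hab), fun t => (e t).2⟩⟩
      left_inv := fun f => rfl
      right_inv := fun e => by ext t; rfl }
  rw [hBc, Fintype.card_congr hEq, Fintype.card_embedding_eq, Fintype.card_coe,
    Fintype.card_coe]

lemma mgf_bound {m K : ℕ} (hm : m = 2 * K) (S H : Finset (Fin m)) (hH : H.card = K)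
    (lam : ℝ) (hlam : 1 ≤ lam) :
    ∑ σ : Equiv.Perm (Fin m), lam ^ (S.filter (fun t => σ t ∈ H)).card
      ≤ (Nat.factorial m : ℝ) * ((1 + lam) / 2) ^ S.card := by
  classical
  have hlam0 : (0:ℝ) ≤ (lam - 1) / 2 := by linarith
  have hstep1 : ∀ σ : Equiv.Perm (Fin m),
      lam ^ (S.filter (fun t => σ t ∈ H)).card
        = ∏ t ∈ S, ((lam - 1) * (if σ t ∈ H then (1:ℝ) else 0) + 1) := by
    intro σ
    rw [← Finset.prod_filter_mul_prod_filter_not S (fun t => σ t ∈ H)]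
    have h1 : ∏ t ∈ S.filter (fun t => σ t ∈ H),
        ((lam - 1) * (if σ t ∈ H then (1:ℝ) else 0) + 1)
          = lam ^ (S.filter (fun t => σ t ∈ H)).card := by
      rw [Finset.prod_congr rfl (g := fun _ => lam)
        (fun t ht => by rw [if_pos (Finset.mem_filter.1 ht).2]; ring), Finset.prod_const]
    have h2 : ∏ t ∈ S.filter (fun t => ¬ σ t ∈ H),
        ((lam - 1) * (if σ t ∈ H then (1:ℝ) else 0) + 1) = 1 :=
      Finset.prod_eq_one (fun t ht => by rw [if_neg (Finset.mem_filter.1 ht).2]; ring)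
    rw [h1, h2, mul_one]
  calc ∑ σ : Equiv.Perm (Fin m), lam ^ (S.filter (fun t => σ t ∈ H)).card
      = ∑ σ : Equiv.Perm (Fin m), ∑ T ∈ S.powerset,
          (∏ t ∈ T, (lam - 1) * (if σ t ∈ H then (1:ℝ) else 0)) * ∏ _t ∈ S \ T, (1:ℝ) := by
        refine Finset.sum_congr rfl fun σ _ => ?_
        rw [hstep1 σ, Finset.prod_add]
    _ = ∑ T ∈ S.powerset, (lam - 1) ^ T.card *
          ((Finset.univ.filter (fun σ : Equiv.Perm (Fin m) => ∀ t ∈ T, σ t ∈ H)).card : ℝ) := by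
        rw [Finset.sum_comm]
        refine Finset.sum_congr rfl fun T _ => ?_
        have h3 : ∀ σ : Equiv.Perm (Fin m),
            (∏ t ∈ T, (lam - 1) * (if σ t ∈ H then (1:ℝ) else 0)) * ∏ _t ∈ S \ T, (1:ℝ)
              = (lam - 1) ^ T.card * (if ∀ t ∈ T, σ t ∈ H then (1:ℝ) else 0) := by
          intro σ
          simp only [Finset.prod_const_one, mul_one, Finset.prod_mul_distrib,
            Finset.prod_const, Finset.prod_boole]
          congr
        rw [Finset.sum_congr rfl (fun σ _ => h3 σ), ← Finset.mul_sum, Finset.sum_boole]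
    _ = ∑ T ∈ S.powerset, (lam - 1) ^ T.card *
          ((K.descFactorial T.card * Nat.factorial (m - T.card) : ℕ) : ℝ) := by
        refine Finset.sum_congr rfl fun T _ => ?_
        rw [count_mapsto, hH]
    _ = ∑ j ∈ Finset.range (S.card + 1), S.card.choose j •
          ((lam - 1) ^ j * ((K.descFactorial j * Nat.factorial (m - j) : ℕ) : ℝ)) := by
        exact Finset.sum_powerset_apply_card
          (f := fun j => (lam - 1) ^ j * ((K.descFactorial j * Nat.factorial (m - j) : ℕ) : ℝ))
    _ ≤ ∑ j ∈ Finset.range (S.card + 1),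
          (Nat.factorial m : ℝ) * (((lam - 1) / 2) ^ j * 1 ^ (S.card - j) * S.card.choose j) := by
        refine Finset.sum_le_sum fun j _ => ?_
        rw [nsmul_eq_mul]
        have hkey : ((K.descFactorial j * Nat.factorial (m - j) : ℕ) : ℝ) * 2 ^ j
            ≤ (Nat.factorial m : ℝ) := by
          have := key_nat K j
          rw [← hm] at this
          calc ((K.descFactorial j * Nat.factorial (m - j) : ℕ) : ℝ) * 2 ^ j
              = ((2 ^ j * (K.descFactorial j * Nat.factorial (m - j)) : ℕ) : ℝ) := by
                push_cast; ring
            _ ≤ (Nat.factorial m : ℝ) := by exact_mod_cast this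
        have h4 : (lam - 1) ^ j * ((K.descFactorial j * Nat.factorial (m - j) : ℕ) : ℝ)
            ≤ ((lam - 1) / 2) ^ j * (Nat.factorial m : ℝ) := by
          have h5 : (lam - 1) ^ j = ((lam - 1) / 2) ^ j * 2 ^ j := by
            rw [← mul_pow]; ring_nf
          calc (lam - 1) ^ j * ((K.descFactorial j * Nat.factorial (m - j) : ℕ) : ℝ)
              = ((lam - 1) / 2) ^ j * (((K.descFactorial j * Nat.factorial (m - j) : ℕ) : ℝ)
                  * 2 ^ j) := by rw [h5]; ring
            _ ≤ ((lam - 1) / 2) ^ j * (Nat.factorial m : ℝ) :=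
                mul_le_mul_of_nonneg_left hkey (pow_nonneg hlam0 j)
        calc (S.card.choose j : ℝ) * ((lam - 1) ^ j *
              ((K.descFactorial j * Nat.factorial (m - j) : ℕ) : ℝ))
            ≤ (S.card.choose j : ℝ) * (((lam - 1) / 2) ^ j * (Nat.factorial m : ℝ)) :=
              mul_le_mul_of_nonneg_left h4 (Nat.cast_nonneg _)
          _ = (Nat.factorial m : ℝ) * (((lam - 1) / 2) ^ j * 1 ^ (S.card - j) * S.card.choose j) := by
              ring
    _ = (Nat.factorial m : ℝ) * (((lam - 1) / 2 + 1) ^ S.card) := by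
        rw [← Finset.mul_sum, ← add_pow]
    _ = (Nat.factorial m : ℝ) * ((1 + lam) / 2) ^ S.card := by ring_nf

/-- For `m` an even positive integer, `S` a nonempty subset of `Fin m`,
`δ ∈ (0,1]`, and `σ` a uniformly random permutation of `Fin m`, the number of
elements of `S` whose image under `σ` lands in the first half `{t : t < m/2}`
deviates from `|S|/2` by more than `δ·|S|/2` with probability at most
`2·exp(−|S|·δ²/6)`. -/
theorem stmt_0 (m : ℕ) (hm : 0 < m) (hme : Even m)
    (S : Finset (Fin m)) (hS : S.Nonempty)
    (δ : ℝ) (hδ0 : 0 < δ) (hδ1 : δ ≤ 1) :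
    ((Finset.univ.filter (fun σ : Equiv.Perm (Fin m) =>
        δ * (S.card : ℝ) / 2 <
          |((S.filter (fun t => ((σ t : ℕ) < m / 2))).card : ℝ) - (S.card : ℝ) / 2|)).card : ℝ)
      / (Fintype.card (Equiv.Perm (Fin m)) : ℝ)
      ≤ 2 * Real.exp (-((S.card : ℝ) * δ ^ 2) / 6) := by
  classical
  obtain ⟨K, hK⟩ := hme
  have hm2 : m = 2 * K := by omega
  have hdiv : m / 2 = K := by omega
  have hKpos : 0 < K := by omega
  have hKm : K < m := by omega
  simp only [hdiv]
  set n := S.card with hn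
  -- the first-half set
  set H : Finset (Fin m) := Finset.univ.filter (fun y : Fin m => (y : ℕ) < K) with hH
  have hHcard : H.card = K := by
    rw [hH]
    rw [Finset.card_bij' (i := fun (y : Fin m) _ => (y : ℕ))
      (j := fun (a : ℕ) (ha : a ∈ Finset.range K) => (⟨a, by
        simp only [Finset.mem_range] at ha; omega⟩ : Fin m))
      (hi := ?_) (hj := ?_) (left_inv := ?_) (right_inv := ?_)]
    · exact Finset.card_range K
    · intro y hy
      simp only [Finset.mem_filter] at hy
      simp [hy.2]
    · intro a ha
      simp only [Finset.mem_range] at ha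
      simp [ha]
    · intro y _; simp
    · intro a _; simp
  -- X σ
  set X : Equiv.Perm (Fin m) → ℕ := fun σ => (S.filter (fun t => ((σ t : ℕ) < K))).card with hX
  have hXle : ∀ σ, X σ ≤ n := fun σ => Finset.card_filter_le _ _
  -- the swap permutation
  haveI : NeZero m := ⟨hm.ne'⟩
  set c : Fin m := ⟨K, hKm⟩ with hc
  set τ : Equiv.Perm (Fin m) := Equiv.addRight c with hτdef
  have hτ : ∀ y : Fin m, (((τ y : Fin m) : ℕ) < K ↔ ¬ ((y : ℕ) < K)) := by
    intro y
    have hval : ((τ y : Fin m) : ℕ) = ((y : ℕ) + K) % m := by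
      rw [hτdef]
      show (((y + c : Fin m)) : ℕ) = ((y : ℕ) + K) % m
      rw [Fin.val_add, hc]
    by_cases hy : (y : ℕ) < K
    · have : ((y : ℕ) + K) % m = (y : ℕ) + K := Nat.mod_eq_of_lt (by omega)
      rw [hval, this]
      constructor
      · intro h; omega
      · intro h; omega
    · have hylt : (y : ℕ) < m := y.2
      have h1 : ((y : ℕ) + K) % m = ((y : ℕ) + K - m) % m := Nat.mod_eq_sub_mod (by omega)
      have h2 : ((y : ℕ) + K - m) % m = (y : ℕ) + K - m := Nat.mod_eq_of_lt (by omega)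
      rw [hval, h1, h2]
      constructor
      · intro _; exact hy
      · intro _; omega
  have hτ' : ∀ y : Fin m, ((((τ.symm y : Fin m)) : ℕ) < K ↔ ¬ ((y : ℕ) < K)) := by
    intro y
    have := hτ (τ.symm y)
    rw [Equiv.apply_symm_apply] at this
    exact iff_not_comm.mp this
  -- composing with τ flips the count
  have hflip : ∀ (ρ : Equiv.Perm (Fin m)) (w : Fin m → Fin m),
      (∀ y : Fin m, ((w y : ℕ) < K ↔ ¬ ((y : ℕ) < K))) →
      (S.filter (fun t => ((w (ρ t) : ℕ) < K))).card = n - X ρ := by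
    intro ρ w hw
    have h1 : S.filter (fun t => ((w (ρ t) : ℕ) < K))
        = S.filter (fun t => ¬ ((ρ t : ℕ) < K)) :=
      Finset.filter_congr (fun t _ => by rw [hw])
    rw [h1, Finset.filter_not, Finset.card_sdiff_of_subset (Finset.filter_subset _ _)]
  -- events
  set Eup : Finset (Equiv.Perm (Fin m)) :=
    Finset.univ.filter (fun σ => δ * (n : ℝ) / 2 < (X σ : ℝ) - (n : ℝ) / 2) with hEup
  set Elow : Finset (Equiv.Perm (Fin m)) :=
    Finset.univ.filter (fun σ => δ * (n : ℝ) / 2 < (n : ℝ) / 2 - (X σ : ℝ)) with hElow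
  -- lower tail has same size as upper tail
  have hcardeq : Elow.card = Eup.card := by
    apply Finset.card_bij' (i := fun (ρ : Equiv.Perm (Fin m)) _ => ρ.trans τ.symm)
      (j := fun (σ : Equiv.Perm (Fin m)) _ => σ.trans τ)
    · intro ρ hρ
      rw [hElow, Finset.mem_filter] at hρ
      rw [hEup, Finset.mem_filter]
      refine ⟨Finset.mem_univ _, ?_⟩
      have hXc : X (ρ.trans τ.symm) = n - X ρ := hflip ρ _ hτ'
      have : ((X (ρ.trans τ.symm) : ℕ) : ℝ) = (n : ℝ) - (X ρ : ℝ) := by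
        rw [hXc, Nat.cast_sub (hXle ρ)]
      rw [this]
      linarith [hρ.2]
    · intro σ hσ
      rw [hEup, Finset.mem_filter] at hσ
      rw [hElow, Finset.mem_filter]
      refine ⟨Finset.mem_univ _, ?_⟩
      have hXc : X (σ.trans τ) = n - X σ := hflip σ _ hτ
      have : ((X (σ.trans τ) : ℕ) : ℝ) = (n : ℝ) - (X σ : ℝ) := by
        rw [hXc, Nat.cast_sub (hXle σ)]
      rw [this]
      linarith [hσ.2]
    · intro ρ _; ext x; simp
    · intro σ _; ext x; simp
  -- upper tail bound
  have hupper : (Eup.card : ℝ)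
      ≤ (Nat.factorial m : ℝ) * Real.exp (-((n : ℝ) * δ ^ 2) / 2) := by
    set lam : ℝ := Real.exp (2 * δ) with hlamedef
    have hlam1 : 1 ≤ lam := Real.one_le_exp (by linarith)
    have hmgf := mgf_bound hm2 S H hHcard lam hlam1
    have hXeq : ∀ σ : Equiv.Perm (Fin m),
        (S.filter (fun t => σ t ∈ H)).card = X σ := by
      intro σ
      congr 1
      apply Finset.filter_congr
      intro t _
      rw [hH]
      simp
    -- pointwise lower bound on Eup
    have hpt : ∀ σ ∈ Eup, Real.exp ((n : ℝ) * δ + (n : ℝ) * δ ^ 2) ≤ lam ^ X σ := by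
      intro σ hσ
      rw [hEup, Finset.mem_filter] at hσ
      have h1 : lam ^ X σ = Real.exp ((X σ : ℝ) * (2 * δ)) := (Real.exp_nat_mul _ _).symm
      rw [h1]
      apply Real.exp_le_exp.2
      have h2 : (n : ℝ) / 2 + δ * n / 2 < (X σ : ℝ) := by linarith [hσ.2]
      nlinarith [h2, hδ0]
    have hsum1 : (Eup.card : ℝ) * Real.exp ((n : ℝ) * δ + (n : ℝ) * δ ^ 2)
        ≤ ∑ σ : Equiv.Perm (Fin m), lam ^ X σ := by
      calc (Eup.card : ℝ) * Real.exp ((n : ℝ) * δ + (n : ℝ) * δ ^ 2)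
          ≤ ∑ σ ∈ Eup, lam ^ X σ := by
            rw [← nsmul_eq_mul]
            exact Finset.card_nsmul_le_sum _ _ _ hpt
        _ ≤ ∑ σ : Equiv.Perm (Fin m), lam ^ X σ :=
            Finset.sum_le_sum_of_subset_of_nonneg (Finset.subset_univ _)
              (fun σ _ _ => pow_nonneg (by positivity) _)
    have hsum2 : ∑ σ : Equiv.Perm (Fin m), lam ^ X σ
        ≤ (Nat.factorial m : ℝ) * Real.exp ((n : ℝ) * (δ + δ ^ 2 / 2)) := by
      have h3 : ∑ σ : Equiv.Perm (Fin m), lam ^ X σ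
          ≤ (Nat.factorial m : ℝ) * ((1 + lam) / 2) ^ n := by
        calc ∑ σ : Equiv.Perm (Fin m), lam ^ X σ
            = ∑ σ : Equiv.Perm (Fin m), lam ^ (S.filter (fun t => σ t ∈ H)).card := by
              refine Finset.sum_congr rfl fun σ _ => ?_
              rw [hXeq]
          _ ≤ (Nat.factorial m : ℝ) * ((1 + lam) / 2) ^ S.card := hmgf
      refine h3.trans ?_
      apply mul_le_mul_of_nonneg_left _ (Nat.cast_nonneg _)
      have hch : (1 + lam) / 2 ≤ Real.exp (δ + δ ^ 2 / 2) := by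
        have e1 : Real.exp δ * Real.exp δ = lam := by
          rw [← Real.exp_add]; congr 1; ring
        have e2 : Real.exp δ * Real.exp (-δ) = 1 := by
          rw [← Real.exp_add]; simp
        have hcosh : Real.exp δ * Real.cosh δ = (1 + lam) / 2 := by
          rw [Real.cosh_eq]
          field_simp
          linear_combination e1 + e2
        have : Real.exp δ * Real.cosh δ ≤ Real.exp δ * Real.exp (δ ^ 2 / 2) :=
          mul_le_mul_of_nonneg_left (Real.cosh_le_exp_half_sq δ) (Real.exp_pos δ).le
        rw [hcosh, ← Real.exp_add] at this
        convert this using 2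
      calc ((1 + lam) / 2) ^ n ≤ Real.exp (δ + δ ^ 2 / 2) ^ n :=
            pow_le_pow_left₀ (by positivity) hch n
        _ = Real.exp ((n : ℝ) * (δ + δ ^ 2 / 2)) := (Real.exp_nat_mul _ _).symm
    have hfinal := hsum1.trans hsum2
    have hexp_pos : (0:ℝ) < Real.exp ((n : ℝ) * δ + (n : ℝ) * δ ^ 2) := Real.exp_pos _
    rw [show -((n : ℝ) * δ ^ 2) / 2
        = (n : ℝ) * (δ + δ ^ 2 / 2) - ((n : ℝ) * δ + (n : ℝ) * δ ^ 2) from by ring,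
      Real.exp_sub, ← mul_div_assoc, le_div_iff₀ hexp_pos]
    exact hfinal
  -- assembly
  have hsubset : Finset.univ.filter (fun σ : Equiv.Perm (Fin m) =>
      δ * (n : ℝ) / 2 < |((S.filter (fun t => ((σ t : ℕ) < K))).card : ℝ) - (n : ℝ) / 2|)
      ⊆ Eup ∪ Elow := by
    intro σ hσ
    rw [Finset.mem_filter] at hσ
    rcases abs_cases ((X σ : ℝ) - (n : ℝ) / 2) with ⟨habs, _⟩ | ⟨habs, _⟩
    · apply Finset.mem_union_left
      rw [hEup, Finset.mem_filter]
      exact ⟨Finset.mem_univ _, by rw [← habs]; exact hσ.2⟩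
    · apply Finset.mem_union_right
      rw [hElow, Finset.mem_filter]
      refine ⟨Finset.mem_univ _, ?_⟩
      have := hσ.2
      rw [habs] at this
      linarith
  have hcount : ((Finset.univ.filter (fun σ : Equiv.Perm (Fin m) =>
      δ * (n : ℝ) / 2 < |((S.filter (fun t => ((σ t : ℕ) < K))).card : ℝ) - (n : ℝ) / 2|)).card : ℝ)
      ≤ 2 * ((Nat.factorial m : ℝ) * Real.exp (-((n : ℝ) * δ ^ 2) / 2)) := by
    have h1 := Finset.card_le_card hsubset
    have h2 := Finset.card_union_le Eup Elow
    have : ((Finset.univ.filter (fun σ : Equiv.Perm (Fin m) =>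
        δ * (n : ℝ) / 2 < |((S.filter (fun t => ((σ t : ℕ) < K))).card : ℝ) - (n : ℝ) / 2|)).card : ℕ)
        ≤ Eup.card + Elow.card := le_trans h1 h2
    calc ((Finset.univ.filter (fun σ : Equiv.Perm (Fin m) =>
        δ * (n : ℝ) / 2 < |((S.filter (fun t => ((σ t : ℕ) < K))).card : ℝ) - (n : ℝ) / 2|)).card : ℝ)
        ≤ (Eup.card : ℝ) + (Elow.card : ℝ) := by exact_mod_cast this
      _ = 2 * (Eup.card : ℝ) := by rw [hcardeq]; ring
      _ ≤ 2 * ((Nat.factorial m : ℝ) * Real.exp (-((n : ℝ) * δ ^ 2) / 2)) := by linarith [hupper]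
  have hfact_pos : (0:ℝ) < (Nat.factorial m : ℝ) := by exact_mod_cast Nat.factorial_pos m
  have hcardperm : (Fintype.card (Equiv.Perm (Fin m)) : ℝ) = (Nat.factorial m : ℝ) := by
    rw [Fintype.card_perm, Fintype.card_fin]
  rw [hcardperm, div_le_iff₀ hfact_pos]
  calc ((Finset.univ.filter (fun σ : Equiv.Perm (Fin m) =>
      δ * (n : ℝ) / 2 < |((S.filter (fun t => ((σ t : ℕ) < K))).card : ℝ) - (n : ℝ) / 2|)).card : ℝ)
      ≤ 2 * ((Nat.factorial m : ℝ) * Real.exp (-((n : ℝ) * δ ^ 2) / 2)) := hcount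
    _ ≤ 2 * Real.exp (-((n : ℝ) * δ ^ 2) / 6) * (Nat.factorial m : ℝ) := by
        have hmono : Real.exp (-((n : ℝ) * δ ^ 2) / 2) ≤ Real.exp (-((n : ℝ) * δ ^ 2) / 6) := by
          apply Real.exp_le_exp.2
          have hnn : (0:ℝ) ≤ (n : ℝ) * δ ^ 2 := by positivity
          linarith
        nlinarith [hfact_pos, hmono, Real.exp_pos (-((n : ℝ) * δ ^ 2) / 2)]
end

section
/- Let m, κ be positive integers with 2κ dividing m, let S be a nonempty subset of Fin m, let δ ∈ (0,1], and fix k ∈ {1,…,κ}. Let C_k = {t ∈ Fin m : m/2 + (k−1)·m/(2κ) ≤ t < m/2 + k·m/(2κ)} be the positions of the k-th chunk of the second half. Let σ be a permutation of Fin m drawn uniformly at random and let X_k = |{t ∈ S : σ t ∈ C_k}|. Then the probability that |X_k − |S|/(2κ)| > δ·|S|/(2κ) is at most 2·exp(−|S|·δ²/(6κ)). -/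
open scoped Classical

section StmtOneAux


/-- Analytic step inequality for the pgf induction, main case 1 ≤ c ≤ n. -/
lemma step_main (n s c : ℕ) (hc1 : 1 ≤ c) (hc : c ≤ n) (hs : s ≤ n) (w : ℝ) (hw : w ≤ 1) :
    (c:ℝ)*(1-w)*(1 - w*((c:ℝ)-1)/n)^s + ((n:ℝ)+1-c)*(1 - w*c/n)^s
      ≤ ((n:ℝ)+1)*(1 - w*c/((n:ℝ)+1))^(s+1) := by
  have hn1 : 1 ≤ n := le_trans hc1 hc
  set N : ℝ := (n:ℝ) with hNdef
  have hN : (1:ℝ) ≤ N := by rw [hNdef]; exact_mod_cast hn1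
  have hN0 : N ≠ 0 := by positivity
  set M : ℝ := N + 1 with hMdef
  have hM : (0:ℝ) < M := by positivity
  set cR : ℝ := (c:ℝ) with hcRdef
  have hcR1 : (1:ℝ) ≤ cR := by rw [hcRdef]; exact_mod_cast hc1
  have hcRN : cR ≤ N := by rw [hcRdef, hNdef]; exact_mod_cast hc
  set A : ℝ := 1 - w*cR/M with hAdef
  have hA : 0 < A := by
    rw [hAdef, sub_pos, div_lt_one hM]
    nlinarith [mul_le_mul_of_nonneg_right hw (by linarith : (0:ℝ) ≤ cR)]
  have hA0 : A ≠ 0 := ne_of_gt hA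
  set lam : ℝ := (s:ℝ)/N with hlamdef
  have hsR : (s:ℝ) ≤ N := by rw [hNdef]; exact_mod_cast hs
  have hlam0 : 0 ≤ lam := by positivity
  have hlam1 : lam ≤ 1 := by rw [hlamdef, div_le_one (by linarith)]; exact hsR
  set al : ℝ := w*(M-cR)/(M*A) with haldef
  set be : ℝ := w*cR/(M*A) with hbedef
  -- B1 bound
  have hB1nn : (0:ℝ) ≤ 1 - w*(cR-1)/N := by
    rw [sub_nonneg, div_le_one (by linarith)]
    nlinarith [mul_le_mul_of_nonneg_right hw (by linarith : (0:ℝ) ≤ cR - 1)]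
  have hAal : A * al = w*(M-cR)/M := by
    rw [haldef, mul_div_assoc']
    rw [show A * (w * (M - cR)) = (w*(M-cR)/M) * (M*A) by field_simp]
    exact mul_div_cancel_right₀ _ (by positivity)
  have hAbe : A * be = w*cR/M := by
    rw [hbedef, mul_div_assoc']
    rw [show A * (w * cR) = (w*cR/M) * (M*A) by field_simp]
    exact mul_div_cancel_right₀ _ (by positivity)
  have idB1 : 1 - w*(cR-1)/N = A * (1 + al/N) := by
    have e : A * (1 + al/N) = A + (A*al)/N := by ring
    rw [e, hAal, hAdef]; field_simp; ring
  have h4 : (1 - w*(cR-1)/N)^s ≤ A^s * Real.exp (lam*al) := by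
    have hexp : 1 + al/N ≤ Real.exp (al/N) := by
      have := Real.add_one_le_exp (al/N); linarith
    have hb : 1 - w*(cR-1)/N ≤ A * Real.exp (al/N) := by
      rw [idB1]; exact mul_le_mul_of_nonneg_left hexp hA.le
    calc (1 - w*(cR-1)/N)^s ≤ (A * Real.exp (al/N))^s := pow_le_pow_left₀ hB1nn hb s
      _ = A^s * Real.exp (al/N)^s := mul_pow _ _ _
      _ = A^s * Real.exp (lam*al) := by
          rw [← Real.exp_nat_mul]
          congr 1
          rw [hlamdef]; field_simp <;> ring
  -- B2 bound
  have hB2nn : (0:ℝ) ≤ 1 - w*cR/N := by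
    rw [sub_nonneg, div_le_one (by linarith)]
    nlinarith [mul_le_mul_of_nonneg_right hw (by linarith : (0:ℝ) ≤ cR)]
  have idB2 : 1 - w*cR/N = A * (1 + (-be)/N) := by
    have e : A * (1 + (-be)/N) = A - (A*be)/N := by ring
    rw [e, hAbe, hAdef]; field_simp; ring
  have h5 : (1 - w*cR/N)^s ≤ A^s * Real.exp (lam*(-be)) := by
    have hexp : 1 + (-be)/N ≤ Real.exp ((-be)/N) := by
      have := Real.add_one_le_exp ((-be)/N); linarith
    have hb : 1 - w*cR/N ≤ A * Real.exp ((-be)/N) := by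
      rw [idB2]; exact mul_le_mul_of_nonneg_left hexp hA.le
    calc (1 - w*cR/N)^s ≤ (A * Real.exp ((-be)/N))^s := pow_le_pow_left₀ hB2nn hb s
      _ = A^s * Real.exp ((-be)/N)^s := mul_pow _ _ _
      _ = A^s * Real.exp (lam*(-be)) := by
          rw [← Real.exp_nat_mul]
          congr 1
          rw [hlamdef]; field_simp <;> ring
  -- convexity
  have hconv : ∀ x : ℝ, Real.exp (lam*x) ≤ (1-lam) + lam * Real.exp x := by
    intro x
    have := convexOn_exp.2 (Set.mem_univ (0:ℝ)) (Set.mem_univ x)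
      (by linarith : (0:ℝ) ≤ 1 - lam) hlam0 (by ring)
    simpa [smul_eq_mul, Real.exp_zero] using this
  -- endpoint bounds
  have h7 : (1-w) * Real.exp al ≤ A := by
    have h := Real.add_one_le_exp (-al)
    rw [Real.exp_neg] at h
    have h2 : (1 - al) * Real.exp al ≤ 1 := by
      have := mul_le_mul_of_nonneg_right (by linarith : 1 - al ≤ (Real.exp al)⁻¹)
        (Real.exp_pos al).le
      rwa [inv_mul_cancel₀ (ne_of_gt (Real.exp_pos al))] at this
    have idw : 1 - w = A * (1 - al) := by
      have e : A * (1 - al) = A - A*al := by ring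
      rw [e, hAal, hAdef]; field_simp; ring
    calc (1-w) * Real.exp al = A * ((1 - al) * Real.exp al) := by rw [idw]; ring
      _ ≤ A * 1 := mul_le_mul_of_nonneg_left h2 hA.le
      _ = A := mul_one A
  have h8 : Real.exp (-be) ≤ A := by
    have h := Real.add_one_le_exp be
    have idbe := hAbe
    have h2 : 1 ≤ A * Real.exp be := by
      have h3 : A * (be + 1) ≤ A * Real.exp be := mul_le_mul_of_nonneg_left h hA.le
      have e : A * (be + 1) = 1 := by
        have e2 : A * (be + 1) = A * be + A := by ring
        rw [e2, idbe, hAdef]; ring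
      linarith
    have hmul : Real.exp (-be) * Real.exp be = 1 := by
      rw [← Real.exp_add]; simp
    have hh := mul_le_mul_of_nonneg_left h2 (Real.exp_pos (-be)).le
    calc Real.exp (-be) = Real.exp (-be) * 1 := (mul_one _).symm
      _ ≤ Real.exp (-be) * (A * Real.exp be) := hh
      _ = A * (Real.exp (-be) * Real.exp be) := by ring
      _ = A := by rw [hmul, mul_one]
  -- assembly
  have hcoef1 : 0 ≤ cR * (1-w) := mul_nonneg (by linarith) (by linarith)
  have hcoef2 : 0 ≤ M - cR := by linarith
  have hMA : cR*(1-w) + (M - cR) = M * A := by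
    have e : M * A = M - w*cR := by
      rw [hAdef, mul_sub, mul_one, mul_div_cancel₀ _ (ne_of_gt hM)]
    rw [e]; ring
  have hY : cR*(1-w)*Real.exp al + (M-cR)*Real.exp (-be) ≤ M * A := by
    have t1 : cR*((1-w)*Real.exp al) ≤ cR*A :=
      mul_le_mul_of_nonneg_left h7 (by linarith)
    rw [← mul_assoc] at t1
    have t2 : (M-cR)*Real.exp (-be) ≤ (M-cR)*A :=
      mul_le_mul_of_nonneg_left h8 hcoef2
    have e : cR*A + (M-cR)*A = M*A := by ring
    linarith
  have hbracket : cR*(1-w)*((1-lam) + lam*Real.exp al) + (M-cR)*((1-lam) + lam*Real.exp (-be))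
      ≤ M * A := by
    have hYlam := mul_le_mul_of_nonneg_left hY hlam0
    calc cR*(1-w)*((1-lam) + lam*Real.exp al) + (M-cR)*((1-lam) + lam*Real.exp (-be))
        = (1-lam)*(cR*(1-w) + (M-cR)) + lam*(cR*(1-w)*Real.exp al + (M-cR)*Real.exp (-be)) := by
          ring
      _ ≤ (1-lam)*(M*A) + lam*(M*A) := by
          refine add_le_add (le_of_eq (by rw [hMA])) hYlam
      _ = M*A := by ring
  calc cR*(1-w)*(1 - w*(cR-1)/N)^s + (M-cR)*(1 - w*cR/N)^s
      ≤ cR*(1-w)*(A^s * Real.exp (lam*al)) + (M-cR)*(A^s * Real.exp (lam*(-be))) := by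
        exact add_le_add (mul_le_mul_of_nonneg_left h4 hcoef1)
          (mul_le_mul_of_nonneg_left h5 hcoef2)
    _ = A^s * (cR*(1-w)*Real.exp (lam*al) + (M-cR)*Real.exp (lam*(-be))) := by ring
    _ ≤ A^s * (cR*(1-w)*((1-lam) + lam*Real.exp al) + (M-cR)*((1-lam) + lam*Real.exp (-be))) := by
        apply mul_le_mul_of_nonneg_left _ (pow_nonneg hA.le s)
        exact add_le_add (mul_le_mul_of_nonneg_left (hconv al) hcoef1)
          (mul_le_mul_of_nonneg_left (hconv (-be)) hcoef2)
    _ ≤ A^s * (M * A) := mul_le_mul_of_nonneg_left hbracket (pow_nonneg hA.le s)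
    _ = M * A^(s+1) := by ring

lemma step_all (n s c : ℕ) (hc : c ≤ n+1) (hs : s ≤ n) (w : ℝ) (hw : w ≤ 1) :
    (c:ℝ)*(1-w)*(1 - w*((c-1 : ℕ):ℝ)/n)^s + ((n+1-c : ℕ):ℝ)*(1 - w*(c:ℝ)/n)^s
      ≤ ((n:ℝ)+1)*(1 - w*(c:ℝ)/((n:ℝ)+1))^(s+1) := by
  rcases Nat.eq_zero_or_pos c with rfl | hc1
  · simp
  rcases eq_or_lt_of_le hc with rfl | hlt
  · -- c = n+1
    have h1 : (n+1-(n+1) : ℕ) = 0 := by omega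
    have h2 : ((n+1)-1 : ℕ) = n := by omega
    rw [h1, h2]
    rcases Nat.eq_zero_or_pos n with rfl | hn
    · have hs0 : s = 0 := Nat.le_zero.mp hs
      subst hs0
      norm_num
    · have hnn : ((n:ℝ)) ≠ 0 := Nat.cast_ne_zero.mpr hn.ne'
      have e1 : w*(n:ℝ)/n = w := by field_simp
      have e2 : w*((n:ℝ)+1)/((n:ℝ)+1) = w := by
        field_simp
      push_cast
      rw [e1, e2]
      simp only [zero_mul, add_zero]
      exact le_of_eq (by ring)
  · -- 1 ≤ c ≤ n
    have hcn : c ≤ n := by omega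
    have e1 : ((c-1 : ℕ):ℝ) = (c:ℝ)-1 := by
      push_cast [Nat.cast_sub hc1]; ring
    have e2 : ((n+1-c : ℕ):ℝ) = (n:ℝ)+1-c := by
      have : c ≤ n+1 := hc
      push_cast [Nat.cast_sub this]; ring
    rw [e1, e2]
    exact step_main n s c hc1 hcn hs w hw

lemma pgf_canonical (s : ℕ) : ∀ (m : ℕ), s ≤ m → ∀ (C : Finset (Fin m)) (w : ℝ), w ≤ 1 →
    ∑ σ : Equiv.Perm (Fin m), ∏ t ∈ Finset.univ.filter (fun t : Fin m => (t:ℕ) < s),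
      (1 - w * (if σ t ∈ C then (1:ℝ) else 0))
    ≤ (m.factorial : ℝ) * (1 - w * C.card / m)^s := by
  induction s with
  | zero =>
    intro m _ C w _
    have he : (Finset.univ.filter (fun t : Fin m => (t:ℕ) < 0)) = ∅ := by simp
    rw [he]
    simp [Finset.card_univ, Fintype.card_perm]
  | succ s ih =>
    intro m hsm C w hw
    obtain ⟨n, rfl⟩ : ∃ n, m = n + 1 := ⟨m-1, by omega⟩
    have hs : s ≤ n := by omega
    have hfilt : Finset.univ.filter (fun t : Fin (n+1) => (t:ℕ) < s+1)
        = insert 0 ((Finset.univ.filter (fun i : Fin n => (i:ℕ) < s)).image Fin.succ) := by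
      ext t
      simp only [Finset.mem_filter, Finset.mem_univ, true_and, Finset.mem_insert,
        Finset.mem_image]
      constructor
      · intro ht
        rcases Fin.eq_zero_or_eq_succ t with rfl | ⟨i, rfl⟩
        · exact Or.inl rfl
        · right
          refine ⟨i, ?_, rfl⟩
          rw [Fin.val_succ] at ht
          omega
      · rintro (rfl | ⟨i, hi, rfl⟩)
        · simp
        · rw [Fin.val_succ]
          omega
    have h0notmem : (0 : Fin (n+1)) ∉ (Finset.univ.filter (fun i : Fin n => (i:ℕ) < s)).image Fin.succ := by
      simp only [Finset.mem_image]
      rintro ⟨i, _, h⟩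
      exact Fin.succ_ne_zero i h
    -- reindex the sum
    rw [show (∑ σ : Equiv.Perm (Fin (n+1)), ∏ t ∈ Finset.univ.filter (fun t : Fin (n+1) => (t:ℕ) < s+1),
          (1 - w * (if σ t ∈ C then (1:ℝ) else 0)))
        = ∑ x : Fin (n+1) × Equiv.Perm (Fin n),
            ∏ t ∈ Finset.univ.filter (fun t : Fin (n+1) => (t:ℕ) < s+1),
              (1 - w * (if (Equiv.Perm.decomposeFin.symm x) t ∈ C then (1:ℝ) else 0)) from
      Fintype.sum_equiv Equiv.Perm.decomposeFin _ _ (fun σ => by simp)]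
    rw [Fintype.sum_prod_type]
    rw [show ((n+1 : ℕ):ℝ) = (n:ℝ)+1 from by push_cast; ring]
    -- per p: define Cp
    have key : ∀ p : Fin (n+1),
        ∑ τ : Equiv.Perm (Fin n),
          ∏ t ∈ Finset.univ.filter (fun t : Fin (n+1) => (t:ℕ) < s+1),
            (1 - w * (if (Equiv.Perm.decomposeFin.symm (p, τ)) t ∈ C then (1:ℝ) else 0))
        ≤ (1 - w * (if p ∈ C then (1:ℝ) else 0)) *
            ((n.factorial : ℝ) * (1 - w * ((C.erase p).card : ℝ)/n)^s) := by
      intro p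
      set Cp : Finset (Fin n) := Finset.univ.filter (fun x => Equiv.swap 0 p x.succ ∈ C) with hCpdef
      have hCpcard : Cp.card = (C.erase p).card := by
        apply Finset.card_bij (fun x _ => Equiv.swap 0 p x.succ)
        · intro a ha
          rw [Finset.mem_erase]
          constructor
          · intro h
            have : a.succ = 0 :=
              (Equiv.swap 0 p).injective (h.trans (Equiv.swap_apply_left 0 p).symm)
            exact Fin.succ_ne_zero a this
          · exact (Finset.mem_filter.mp ha).2
        · intro a ha b hb h
          exact Fin.succ_injective _ ((Equiv.swap 0 p).injective h)
        · intro b hb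
          rw [Finset.mem_erase] at hb
          have hz : Equiv.swap 0 p b ≠ 0 := by
            intro h
            apply hb.1
            have := congrArg (Equiv.swap 0 p) h
            rwa [Equiv.swap_apply_self, Equiv.swap_apply_left] at this
          refine ⟨(Equiv.swap 0 p b).pred hz, ?_, ?_⟩
          · rw [hCpdef, Finset.mem_filter]
            refine ⟨Finset.mem_univ _, ?_⟩
            rw [Fin.succ_pred, Equiv.swap_apply_self]
            exact hb.2
          · rw [Fin.succ_pred, Equiv.swap_apply_self]
      -- rewrite each product
      have hprod : ∀ τ : Equiv.Perm (Fin n),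
          ∏ t ∈ Finset.univ.filter (fun t : Fin (n+1) => (t:ℕ) < s+1),
            (1 - w * (if (Equiv.Perm.decomposeFin.symm (p, τ)) t ∈ C then (1:ℝ) else 0))
          = (1 - w * (if p ∈ C then (1:ℝ) else 0)) *
            ∏ i ∈ Finset.univ.filter (fun i : Fin n => (i:ℕ) < s),
              (1 - w * (if τ i ∈ Cp then (1:ℝ) else 0)) := by
        intro τ
        rw [hfilt, Finset.prod_insert h0notmem, Finset.prod_image
          (fun a _ b _ h => Fin.succ_injective _ h)]
        congr 1
        · rw [Equiv.Perm.decomposeFin_symm_apply_zero]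
        · apply Finset.prod_congr rfl
          intro i _
          rw [Equiv.Perm.decomposeFin_symm_apply_succ]
          congr 2
          simp [hCpdef]
      calc ∑ τ : Equiv.Perm (Fin n), ∏ t ∈ Finset.univ.filter (fun t : Fin (n+1) => (t:ℕ) < s+1),
            (1 - w * (if (Equiv.Perm.decomposeFin.symm (p, τ)) t ∈ C then (1:ℝ) else 0))
          = (1 - w * (if p ∈ C then (1:ℝ) else 0)) *
            ∑ τ : Equiv.Perm (Fin n), ∏ i ∈ Finset.univ.filter (fun i : Fin n => (i:ℕ) < s),
              (1 - w * (if τ i ∈ Cp then (1:ℝ) else 0)) := by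
            rw [Finset.mul_sum]
            exact Finset.sum_congr rfl (fun τ _ => hprod τ)
        _ ≤ (1 - w * (if p ∈ C then (1:ℝ) else 0)) *
            ((n.factorial : ℝ) * (1 - w * (Cp.card : ℝ)/n)^s) := by
            apply mul_le_mul_of_nonneg_left (ih n hs Cp w hw)
            split <;> simp <;> linarith
        _ = (1 - w * (if p ∈ C then (1:ℝ) else 0)) *
            ((n.factorial : ℝ) * (1 - w * ((C.erase p).card : ℝ)/n)^s) := by
            rw [hCpcard]
    -- sum over p
    calc ∑ p : Fin (n+1), ∑ τ : Equiv.Perm (Fin n),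
          ∏ t ∈ Finset.univ.filter (fun t : Fin (n+1) => (t:ℕ) < s+1),
            (1 - w * (if (Equiv.Perm.decomposeFin.symm (p, τ)) t ∈ C then (1:ℝ) else 0))
        ≤ ∑ p : Fin (n+1), (1 - w * (if p ∈ C then (1:ℝ) else 0)) *
            ((n.factorial : ℝ) * (1 - w * ((C.erase p).card : ℝ)/n)^s) :=
          Finset.sum_le_sum (fun p _ => key p)
      _ = (C.card : ℝ)*(1-w)*((n.factorial : ℝ) * (1 - w * ((C.card - 1 : ℕ) : ℝ)/n)^s)
          + ((n+1-C.card : ℕ) : ℝ)*((n.factorial : ℝ) * (1 - w * (C.card : ℝ)/n)^s) := by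
          rw [← Finset.sum_filter_add_sum_filter_not Finset.univ (fun p => p ∈ C)]
          have h1 : ∑ p ∈ Finset.univ.filter (fun p : Fin (n+1) => p ∈ C),
              (1 - w * (if p ∈ C then (1:ℝ) else 0)) *
                ((n.factorial : ℝ) * (1 - w * ((C.erase p).card : ℝ)/n)^s)
              = (Finset.univ.filter (fun p : Fin (n+1) => p ∈ C)).card •
                ((1 - w) * ((n.factorial : ℝ) * (1 - w * ((C.card - 1 : ℕ) : ℝ)/n)^s)) := by
            rw [← Finset.sum_const]
            apply Finset.sum_congr rfl
            intro p hp
            have hp' : p ∈ C := (Finset.mem_filter.mp hp).2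
            rw [if_pos hp', Finset.card_erase_of_mem hp']
            ring
          have h2 : ∑ p ∈ Finset.univ.filter (fun p : Fin (n+1) => ¬ p ∈ C),
              (1 - w * (if p ∈ C then (1:ℝ) else 0)) *
                ((n.factorial : ℝ) * (1 - w * ((C.erase p).card : ℝ)/n)^s)
              = (Finset.univ.filter (fun p : Fin (n+1) => ¬ p ∈ C)).card •
                ((n.factorial : ℝ) * (1 - w * ((C.card : ℕ) : ℝ)/n)^s) := by
            rw [← Finset.sum_const]
            apply Finset.sum_congr rfl
            intro p hp
            have hp' : ¬ p ∈ C := (Finset.mem_filter.mp hp).2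
            rw [if_neg hp', Finset.erase_eq_of_notMem hp']
            ring
          have hcard1 : (Finset.univ.filter (fun p : Fin (n+1) => p ∈ C)).card = C.card := by
            simp [Finset.filter_mem_eq_inter]
          have hcard2 : (Finset.univ.filter (fun p : Fin (n+1) => ¬ p ∈ C)).card = n+1-C.card := by
            rw [Finset.filter_not, Finset.filter_mem_eq_inter, Finset.univ_inter,
              Finset.card_sdiff_of_subset (Finset.subset_univ C), Finset.card_univ, Fintype.card_fin]
          rw [h1, h2, hcard1, hcard2, nsmul_eq_mul, nsmul_eq_mul]
          ring
      _ ≤ (n.factorial : ℝ) * (((n:ℝ)+1)*(1 - w*(C.card:ℝ)/((n:ℝ)+1))^(s+1)) := by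
          have hC : C.card ≤ n+1 := by
            simpa using Finset.card_le_univ C
          have hstep := step_all n s C.card hC hs w hw
          have hf : (0:ℝ) ≤ (n.factorial : ℝ) := Nat.cast_nonneg _
          calc (C.card : ℝ)*(1-w)*((n.factorial : ℝ) * (1 - w * ((C.card - 1 : ℕ) : ℝ)/n)^s)
              + ((n+1-C.card : ℕ) : ℝ)*((n.factorial : ℝ) * (1 - w * (C.card : ℝ)/n)^s)
              = (n.factorial : ℝ) * ((C.card : ℝ)*(1-w)*(1 - w*((C.card-1 : ℕ):ℝ)/n)^s
                  + ((n+1-C.card : ℕ):ℝ)*(1 - w*(C.card:ℝ)/n)^s) := by ring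
            _ ≤ (n.factorial : ℝ) * (((n:ℝ)+1)*(1 - w*(C.card:ℝ)/((n:ℝ)+1))^(s+1)) :=
                mul_le_mul_of_nonneg_left hstep hf
      _ = ((n+1).factorial : ℝ) * (1 - w * (C.card : ℝ)/((n:ℝ)+1))^(s+1) := by
          rw [Nat.factorial_succ]
          push_cast
          ring

lemma card_filter_lt (m b : ℕ) (hb : b ≤ m) :
    (Finset.univ.filter (fun t : Fin m => (t:ℕ) < b)).card = b := by
  rw [Finset.card_bij (fun (x : Fin m) _ => (x : ℕ)) ?_ ?_ ?_ (t := Finset.range b)]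
  · exact Finset.card_range b
  · intro a ha
    rw [Finset.mem_range]
    exact (Finset.mem_filter.mp ha).2
  · intro a _ b _ h
    exact Fin.val_injective h
  · intro y hy
    rw [Finset.mem_range] at hy
    exact ⟨⟨y, lt_of_lt_of_le hy hb⟩, Finset.mem_filter.mpr ⟨Finset.mem_univ _, hy⟩, rfl⟩

lemma pgf_general (m : ℕ) (S C : Finset (Fin m)) (w : ℝ) (hw : w ≤ 1) :
    ∑ σ : Equiv.Perm (Fin m), ∏ t ∈ S, (1 - w * (if σ t ∈ C then (1:ℝ) else 0))
    ≤ (m.factorial : ℝ) * (1 - w * C.card / m)^S.card := by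
  have hsm : S.card ≤ m := by simpa using Finset.card_le_univ S
  set S0 : Finset (Fin m) := Finset.univ.filter (fun t : Fin m => (t:ℕ) < S.card) with hS0def
  have hS0card : S0.card = S.card := card_filter_lt m S.card hsm
  have hcardc : S0ᶜ.card = Sᶜ.card := by
    rw [Finset.card_compl, Finset.card_compl, hS0card]
  let e1 : {x // x ∈ S0} ≃ {x // x ∈ S} := Finset.equivOfCardEq hS0card
  let e2' : {x // ¬ x ∈ S0} ≃ {x // ¬ x ∈ S} :=
    ((Equiv.subtypeEquivRight (fun x => (Finset.mem_compl (s := S0)).symm)).trans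
      (Finset.equivOfCardEq hcardc)).trans
      (Equiv.subtypeEquivRight (fun x => Finset.mem_compl (s := S)))
  let π : Equiv.Perm (Fin m) := Equiv.subtypeCongr e1 e2'
  have hπ : ∀ x ∈ S0, π x ∈ S := by
    intro x hx
    have : π x = (e1 ⟨x, hx⟩ : Fin m) := by
      simp [π, Equiv.subtypeCongr, hx]
    rw [this]
    exact (e1 ⟨x, hx⟩).2
  have himg : S0.image π = S := by
    apply Finset.eq_of_subset_of_card_le
    · intro y hy
      obtain ⟨x, hx, rfl⟩ := Finset.mem_image.mp hy
      exact hπ x hx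
    · rw [Finset.card_image_of_injective _ π.injective, hS0card]
  have hre : ∀ σ : Equiv.Perm (Fin m),
      ∏ t ∈ S, (1 - w * (if σ t ∈ C then (1:ℝ) else 0))
      = ∏ t ∈ S0, (1 - w * (if (σ * π) t ∈ C then (1:ℝ) else 0)) := by
    intro σ
    rw [← himg, Finset.prod_image (fun a _ b _ h => π.injective h)]
    rfl
  calc ∑ σ : Equiv.Perm (Fin m), ∏ t ∈ S, (1 - w * (if σ t ∈ C then (1:ℝ) else 0))
      = ∑ σ : Equiv.Perm (Fin m), ∏ t ∈ S0, (1 - w * (if (σ * π) t ∈ C then (1:ℝ) else 0)) :=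
        Finset.sum_congr rfl (fun σ _ => hre σ)
    _ = ∑ σ : Equiv.Perm (Fin m), ∏ t ∈ S0, (1 - w * (if σ t ∈ C then (1:ℝ) else 0)) := by
        apply Fintype.sum_equiv (Equiv.mulRight π)
        intro σ
        rfl
    _ ≤ (m.factorial : ℝ) * (1 - w * C.card / m)^S.card :=
        pgf_canonical S.card m hsm C w hw

lemma log_lb (δ : ℝ) (h0 : 0 ≤ δ) (h1 : δ ≤ 1) : 2*δ/(2+δ) ≤ Real.log (1+δ) := by
  have hd : (0:ℝ) < 2+δ := by linarith
  set y : ℝ := 2*δ/(2+δ) with hy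
  have hy0 : 0 ≤ y := by positivity
  have hy1 : y ≤ 1 := by
    rw [hy, div_le_one hd]; linarith
  have hyd : y * (2+δ) = 2*δ := by
    rw [hy]; field_simp
  have hb := Real.exp_bound (x := y) (by rw [abs_of_nonneg hy0]; exact hy1) (n := 3) (by norm_num)
  have hsum : ∑ i ∈ Finset.range 3, y^i/(i.factorial : ℝ) = 1 + y + y^2/2 := by
    norm_num [Finset.sum_range_succ, Nat.factorial]
  rw [hsum, abs_of_nonneg hy0] at hb
  norm_num [Nat.factorial] at hb
  have hexp : Real.exp y ≤ 1 + y + y^2/2 + y^3 * (4/(6*3)) := by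
    have := abs_le.mp hb
    nlinarith [this.2]
  have hpoly : 1 + y + y^2/2 + y^3 * (4/(6*3)) ≤ 1 + δ := by
    nlinarith [sq_nonneg y, sq_nonneg δ, mul_pos hd hd, mul_pos (mul_pos hd hd) hd,
      sq_nonneg (y - δ), mul_nonneg (mul_nonneg h0 h0) h0]
  have : Real.exp y ≤ 1 + δ := le_trans hexp hpoly
  rwa [← Real.le_log_iff_exp_le (by linarith)] at this

lemma exp_neg_ub (δ : ℝ) (h0 : 0 ≤ δ) (h1 : δ ≤ 1) :
    Real.exp (-δ) ≤ 1 - δ + (2/3)*δ^2 := by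
  have hb := Real.exp_bound (x := -δ) (by rw [abs_of_nonpos (by linarith)]; linarith) (n := 4)
    (by norm_num)
  have hsum : ∑ i ∈ Finset.range 4, (-δ)^i/(i.factorial : ℝ) = 1 - δ + δ^2/2 - δ^3/6 := by
    norm_num [Finset.sum_range_succ, Nat.factorial]
    ring
  rw [hsum, abs_of_nonpos (by linarith : -δ ≤ 0)] at hb
  norm_num [Nat.factorial] at hb
  have := abs_le.mp hb
  nlinarith [this.2, sq_nonneg δ, sq_nonneg (δ^2), mul_nonneg (mul_nonneg h0 h0) h0]


lemma card_filter_Ico (m a b : ℕ) (hb : b ≤ m) :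
    (Finset.univ.filter (fun y : Fin m => a ≤ (y:ℕ) ∧ (y:ℕ) < b)).card = b - a := by
  rw [Finset.card_bij (fun (x : Fin m) _ => (x : ℕ)) ?_ ?_ ?_ (t := Finset.Ico a b)]
  · exact Nat.card_Ico a b
  · intro x hx
    rw [Finset.mem_Ico]
    exact (Finset.mem_filter.mp hx).2
  · intro x _ y _ h
    exact Fin.val_injective h
  · intro y hy
    rw [Finset.mem_Ico] at hy
    exact ⟨⟨y, lt_of_lt_of_le hy.2 hb⟩, Finset.mem_filter.mpr ⟨Finset.mem_univ _, hy⟩, rfl⟩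

lemma prod_if_pow (m : ℕ) (S : Finset (Fin m)) (P : Fin m → Prop) [DecidablePred P] (u : ℝ) :
    ∏ t ∈ S, (1 - (1-u) * (if P t then (1:ℝ) else 0)) = u ^ (S.filter P).card := by
  have h1 : ∀ t, (1 - (1-u) * (if P t then (1:ℝ) else 0)) = (if P t then u else 1) := by
    intro t; split <;> ring
  calc ∏ t ∈ S, (1 - (1-u) * (if P t then (1:ℝ) else 0))
      = ∏ t ∈ S, (if P t then u else 1) := Finset.prod_congr rfl (fun t _ => h1 t)
    _ = (∏ t ∈ S.filter P, u) * ∏ t ∈ S.filter (fun t => ¬ P t), (1:ℝ) :=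
        Finset.prod_ite (fun _ => u) (fun _ => (1:ℝ))
    _ = u ^ (S.filter P).card := by rw [Finset.prod_const, Finset.prod_const, one_pow, mul_one]

end StmtOneAux

set_option maxHeartbeats 1000000 in
/-- For `m, κ` positive integers with `2κ ∣ m`, `S` a nonempty subset
of `Fin m`, `δ ∈ (0,1]`, and `k ∈ {1,…,κ}`, let `C_k` be the `k`-th chunk of the
second half, i.e. positions `t` with `m/2 + (k−1)·m/(2κ) ≤ t < m/2 + k·m/(2κ)`.
For a uniformly random permutation `σ` of `Fin m`, the number `X_k` of elements of
`S` whose image under `σ` lands in `C_k` deviates from `|S|/(2κ)` by more than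
`δ·|S|/(2κ)` with probability at most `2·exp(−|S|·δ²/(6κ))`. -/
theorem stmt_1 (m κ : ℕ) (hm : 0 < m) (hκ : 0 < κ) (hdiv : 2 * κ ∣ m)
    (S : Finset (Fin m)) (hS : S.Nonempty)
    (δ : ℝ) (hδ0 : 0 < δ) (hδ1 : δ ≤ 1)
    (k : ℕ) (hk1 : 1 ≤ k) (hkκ : k ≤ κ) :
    ((Finset.univ.filter (fun σ : Equiv.Perm (Fin m) =>
        δ * (S.card : ℝ) / (2 * κ) <
          |((S.filter (fun t =>
              m / 2 + (k - 1) * (m / (2 * κ)) ≤ (σ t : ℕ) ∧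
                (σ t : ℕ) < m / 2 + k * (m / (2 * κ)))).card : ℝ)
            - (S.card : ℝ) / (2 * κ)|)).card : ℝ)
      / (Fintype.card (Equiv.Perm (Fin m)) : ℝ)
      ≤ 2 * Real.exp (-((S.card : ℝ) * δ ^ 2) / (6 * κ)) := by
  classical
  obtain ⟨c, hmc⟩ := hdiv
  have hc1 : 1 ≤ c := by
    rcases Nat.eq_zero_or_pos c with rfl | h
    · omega
    · exact h
  have hdiv2 : m / (2*κ) = c := by
    rw [hmc]; exact Nat.mul_div_cancel_left c (by positivity)
  have hhalf : m / 2 = κ * c := by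
    rw [hmc, mul_assoc]; exact Nat.mul_div_cancel_left _ (by norm_num)
  set a := m/2 + (k-1)*(m/(2*κ)) with ha
  set b := m/2 + k*(m/(2*κ)) with hb
  have hkc : k*c = (k-1)*c + c := by
    obtain ⟨k', rfl⟩ : ∃ k', k = k'+1 := ⟨k-1, by omega⟩
    simp [Nat.add_mul]
  have hbm : b ≤ m := by
    rw [hb, hdiv2, hhalf, hmc]
    have : k * c ≤ κ * c := Nat.mul_le_mul_right c hkκ
    nlinarith
  have hba : b - a = c := by
    rw [hb, ha, hdiv2, hkc]
    omega
  set C : Finset (Fin m) := Finset.univ.filter (fun y : Fin m => a ≤ (y:ℕ) ∧ (y:ℕ) < b)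
    with hCdef
  have hCcard : C.card = c := by
    rw [hCdef, card_filter_Ico m a b hbm, hba]
  set s := S.card with hsdef
  have hs1 : 1 ≤ s := Finset.card_pos.mpr hS
  have hKpos : (0:ℝ) < (κ:ℝ) := by exact_mod_cast hκ
  have hcpos : (0:ℝ) < (c:ℝ) := by exact_mod_cast hc1
  have hspos : (0:ℝ) < (s:ℝ) := by exact_mod_cast hs1
  have hmpos : (0:ℝ) < (m:ℝ) := by exact_mod_cast hm
  have hcm : ((C.card:ℝ)) / (m:ℝ) = 1/(2*(κ:ℝ)) := by
    rw [hCcard, hmc]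
    push_cast
    field_simp
  set μ : ℝ := (s:ℝ)/(2*(κ:ℝ)) with hμdef
  have hμpos : 0 < μ := by positivity
  set X : Equiv.Perm (Fin m) → ℕ := fun σ => (S.filter (fun t => σ t ∈ C)).card with hXdef
  have hXeq : ∀ σ : Equiv.Perm (Fin m),
      (S.filter (fun t => a ≤ ((σ t):ℕ) ∧ ((σ t):ℕ) < b)).card = X σ := by
    intro σ
    apply Finset.card_bij (fun t _ => t)  -- same set, different predicate packaging
    · intro t ht
      rw [Finset.mem_filter] at ht ⊢
      exact ⟨ht.1, Finset.mem_filter.mpr ⟨Finset.mem_univ _, ht.2⟩⟩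
    · intro x y _ _ h; exact h
    · intro t ht
      rw [Finset.mem_filter] at ht
      refine ⟨t, Finset.mem_filter.mpr ⟨ht.1, ?_⟩, rfl⟩
      exact (Finset.mem_filter.mp ht.2).2
  -- the three events
  set E := Finset.univ.filter (fun σ : Equiv.Perm (Fin m) =>
      δ * (s : ℝ) / (2 * (κ:ℝ)) <
        |((S.filter (fun t => a ≤ ((σ t):ℕ) ∧ ((σ t):ℕ) < b)).card : ℝ) - (s : ℝ) / (2 * (κ:ℝ))|)
    with hEdef
  set Eup := Finset.univ.filter (fun σ : Equiv.Perm (Fin m) => (1+δ)*μ < (X σ : ℝ)) with hEupdef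
  set Elo := Finset.univ.filter (fun σ : Equiv.Perm (Fin m) => (X σ : ℝ) < (1-δ)*μ) with hElodef
  have hsub : E ⊆ Eup ∪ Elo := by
    intro σ hσ
    rw [hEdef, Finset.mem_filter] at hσ
    have h2 := hσ.2
    rw [hXeq σ] at h2
    rw [Finset.mem_union, hEupdef, hElodef, Finset.mem_filter, Finset.mem_filter]
    have hμ' : δ * (s:ℝ) / (2*(κ:ℝ)) = δ * μ := by rw [hμdef]; ring
    rw [hμ'] at h2
    rcases abs_cases ((X σ : ℝ) - (s:ℝ)/(2*(κ:ℝ))) with ⟨he, _⟩ | ⟨he, _⟩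
    · left
      refine ⟨Finset.mem_univ _, ?_⟩
      rw [he] at h2
      rw [hμdef] at *
      nlinarith
    · right
      refine ⟨Finset.mem_univ _, ?_⟩
      rw [he] at h2
      rw [hμdef] at *
      nlinarith
  -- UPPER TAIL
  have hupper : (Eup.card : ℝ) ≤ (m.factorial : ℝ) * Real.exp (-(μ*δ^2/3)) := by
    set L := Real.log (1+δ) with hLdef
    have hL2 : 2*δ/(2+δ) ≤ L := log_lb δ hδ0.le hδ1
    have hL0 : 0 ≤ L := le_trans (by positivity) hL2
    have h1δ : (0:ℝ) < 1+δ := by linarith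
    have hpowexp : ∀ n : ℕ, (1+δ)^n = Real.exp ((n:ℝ) * L) := by
      intro n
      rw [Real.exp_nat_mul, Real.exp_log h1δ]
    have hmark : ∀ σ ∈ Eup, Real.exp ((1+δ)*μ*L) ≤ (1+δ)^(X σ) := by
      intro σ hσ
      rw [hEupdef, Finset.mem_filter] at hσ
      rw [hpowexp]
      apply Real.exp_le_exp.mpr
      exact mul_le_mul_of_nonneg_right hσ.2.le hL0
    have hcount : (Eup.card : ℝ) * Real.exp ((1+δ)*μ*L)
        ≤ ∑ σ : Equiv.Perm (Fin m), (1+δ)^(X σ) := by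
      have h := Finset.card_nsmul_le_sum Eup (fun σ => (1+δ)^(X σ)) _ hmark
      rw [nsmul_eq_mul] at h
      refine le_trans h (Finset.sum_le_sum_of_subset_of_nonneg (Finset.subset_univ _) ?_)
      intro σ _ _
      positivity
    have hpgf : ∑ σ : Equiv.Perm (Fin m), ((1+δ):ℝ)^(X σ)
        ≤ (m.factorial : ℝ) * (1 + δ/(2*(κ:ℝ)))^s := by
      have heq : ∀ σ : Equiv.Perm (Fin m), ((1+δ):ℝ)^(X σ)
          = ∏ t ∈ S, (1 - (-δ) * (if σ t ∈ C then (1:ℝ) else 0)) := by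
        intro σ
        have hp := prod_if_pow m S (fun t => σ t ∈ C) (1+δ)
        rw [show (1 - (1+δ) : ℝ) = -δ by ring] at hp
        rw [hXdef]
        exact hp.symm
      rw [Finset.sum_congr rfl (fun σ _ => heq σ)]
      have := pgf_general m S C (-δ) (by linarith)
      rw [show (1 - (-δ) * (C.card:ℝ) / m) = 1 + δ * ((C.card:ℝ)/m) by ring, hcm] at this
      rw [show 1 + δ * (1/(2*(κ:ℝ))) = 1 + δ/(2*(κ:ℝ)) by ring] at this
      exact this
    have hexpbound : (1 + δ/(2*(κ:ℝ)))^s ≤ Real.exp (δ*μ) := by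
      have h1 : 1 + δ/(2*(κ:ℝ)) ≤ Real.exp (δ/(2*(κ:ℝ))) := by
        have := Real.add_one_le_exp (δ/(2*(κ:ℝ))); linarith
      calc (1 + δ/(2*(κ:ℝ)))^s ≤ (Real.exp (δ/(2*(κ:ℝ))))^s :=
            pow_le_pow_left₀ (by positivity) h1 s
        _ = Real.exp ((s:ℝ) * (δ/(2*(κ:ℝ)))) := (Real.exp_nat_mul _ s).symm
        _ = Real.exp (δ*μ) := by rw [hμdef]; ring_nf
    have hchain : (Eup.card : ℝ) * Real.exp ((1+δ)*μ*L)
        ≤ (m.factorial : ℝ) * Real.exp (δ*μ) := by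
      refine le_trans hcount (le_trans hpgf ?_)
      exact mul_le_mul_of_nonneg_left hexpbound (Nat.cast_nonneg _)
    have hfinal : (Eup.card : ℝ) ≤ (m.factorial : ℝ) * Real.exp (δ*μ - (1+δ)*μ*L) := by
      rw [Real.exp_sub]
      have hepos := Real.exp_pos ((1+δ)*μ*L)
      calc (Eup.card : ℝ)
          ≤ (m.factorial : ℝ) * Real.exp (δ*μ) / Real.exp ((1+δ)*μ*L) := by
            rw [le_div_iff₀ hepos]; exact hchain
        _ = (m.factorial : ℝ) * (Real.exp (δ*μ) / Real.exp ((1+δ)*μ*L)) := by ring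
    have hexpineq : δ*μ - (1+δ)*μ*L ≤ -(μ*δ^2/3) := by
      have h2d : (0:ℝ) < 2+δ := by linarith
      have hkey : δ + δ^2/3 ≤ (1+δ)*L := by
        have h3 : (1+δ)*(2*δ/(2+δ)) ≤ (1+δ)*L :=
          mul_le_mul_of_nonneg_left hL2 (by linarith)
        have h4 : δ + δ^2/3 ≤ (1+δ)*(2*δ/(2+δ)) := by
          rw [← sub_nonneg]
          have e : (1+δ)*(2*δ/(2+δ)) - (δ + δ^2/3) = δ^2*(1-δ)/(3*(2+δ)) := by
            field_simp
            ring
          rw [e]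
          exact div_nonneg (mul_nonneg (sq_nonneg δ) (by linarith)) (by linarith)
        linarith
      have h5 := mul_le_mul_of_nonneg_left hkey hμpos.le
      have e1 : μ*(δ+δ^2/3) = δ*μ + μ*δ^2/3 := by ring
      have e2 : μ*((1+δ)*L) = (1+δ)*μ*L := by ring
      rw [e1, e2] at h5
      linarith
    calc (Eup.card : ℝ) ≤ (m.factorial : ℝ) * Real.exp (δ*μ - (1+δ)*μ*L) := hfinal
      _ ≤ (m.factorial : ℝ) * Real.exp (-(μ*δ^2/3)) :=
          mul_le_mul_of_nonneg_left (Real.exp_le_exp.mpr hexpineq) (Nat.cast_nonneg _)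
  -- LOWER TAIL
  have hlower : (Elo.card : ℝ) ≤ (m.factorial : ℝ) * Real.exp (-(μ*δ^2/3)) := by
    set u : ℝ := Real.exp (-δ) with hudef
    have hu0 : 0 < u := Real.exp_pos _
    have hu1 : u ≤ 1 := by
      rw [hudef, Real.exp_le_one_iff]
      linarith
    have hK1 : (1:ℝ) ≤ (κ:ℝ) := by exact_mod_cast hκ
    have hmark : ∀ σ ∈ Elo, Real.exp ((1-δ)*μ*(-δ)) ≤ u^(X σ) := by
      intro σ hσ
      rw [hElodef, Finset.mem_filter] at hσ
      rw [hudef, ← Real.exp_nat_mul]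
      apply Real.exp_le_exp.mpr
      exact mul_le_mul_of_nonpos_right hσ.2.le (by linarith)
    have hcount : (Elo.card : ℝ) * Real.exp ((1-δ)*μ*(-δ))
        ≤ ∑ σ : Equiv.Perm (Fin m), u^(X σ) := by
      have h := Finset.card_nsmul_le_sum Elo (fun σ => u^(X σ)) _ hmark
      rw [nsmul_eq_mul] at h
      refine le_trans h (Finset.sum_le_sum_of_subset_of_nonneg (Finset.subset_univ _) ?_)
      intro σ _ _
      positivity
    have hpgf : ∑ σ : Equiv.Perm (Fin m), u^(X σ)
        ≤ (m.factorial : ℝ) * (1 - (1-u)/(2*(κ:ℝ)))^s := by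
      have heq : ∀ σ : Equiv.Perm (Fin m), u^(X σ)
          = ∏ t ∈ S, (1 - (1-u) * (if σ t ∈ C then (1:ℝ) else 0)) := by
        intro σ
        rw [hXdef]
        exact (prod_if_pow m S (fun t => σ t ∈ C) u).symm
      rw [Finset.sum_congr rfl (fun σ _ => heq σ)]
      have hthis := pgf_general m S C (1-u) (by linarith)
      have e3 : 1 - (1-u) * ((C.card:ℝ))/(m:ℝ) = 1 - (1-u)/(2*(κ:ℝ)) := by
        rw [mul_div_assoc, hcm]
        ring
      rw [e3] at hthis
      exact hthis
    have hq0 : (0:ℝ) ≤ 1 - (1-u)/(2*(κ:ℝ)) := by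
      rw [sub_nonneg, div_le_one (by positivity)]
      linarith
    have hexpbound : (1 - (1-u)/(2*(κ:ℝ)))^s ≤ Real.exp (-(1-u)*μ) := by
      have h1 : 1 - (1-u)/(2*(κ:ℝ)) ≤ Real.exp (-((1-u)/(2*(κ:ℝ)))) := by
        have := Real.add_one_le_exp (-((1-u)/(2*(κ:ℝ)))); linarith
      calc (1 - (1-u)/(2*(κ:ℝ)))^s ≤ (Real.exp (-((1-u)/(2*(κ:ℝ)))))^s :=
            pow_le_pow_left₀ hq0 h1 s
        _ = Real.exp ((s:ℝ) * (-((1-u)/(2*(κ:ℝ))))) := (Real.exp_nat_mul _ s).symm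
        _ = Real.exp (-(1-u)*μ) := by
            rw [hμdef]
            congr 1
            field_simp
    have hchain : (Elo.card : ℝ) * Real.exp ((1-δ)*μ*(-δ))
        ≤ (m.factorial : ℝ) * Real.exp (-(1-u)*μ) := by
      refine le_trans hcount (le_trans hpgf ?_)
      exact mul_le_mul_of_nonneg_left hexpbound (Nat.cast_nonneg _)
    have hfinal : (Elo.card : ℝ) ≤ (m.factorial : ℝ) * Real.exp (-(1-u)*μ - (1-δ)*μ*(-δ)) := by
      rw [Real.exp_sub]
      have hepos := Real.exp_pos ((1-δ)*μ*(-δ))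
      calc (Elo.card : ℝ)
          ≤ (m.factorial : ℝ) * Real.exp (-(1-u)*μ) / Real.exp ((1-δ)*μ*(-δ)) := by
            rw [le_div_iff₀ hepos]; exact hchain
        _ = (m.factorial : ℝ) * (Real.exp (-(1-u)*μ) / Real.exp ((1-δ)*μ*(-δ))) := by ring
    have hub : u ≤ 1 - δ + (2/3)*δ^2 := by
      rw [hudef]; exact exp_neg_ub δ hδ0.le hδ1
    have hexpineq : -(1-u)*μ - (1-δ)*μ*(-δ) ≤ -(μ*δ^2/3) := by
      nlinarith [mul_nonneg hμpos.le (sub_nonneg.mpr hub)]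
    calc (Elo.card : ℝ) ≤ (m.factorial : ℝ) * Real.exp (-(1-u)*μ - (1-δ)*μ*(-δ)) := hfinal
      _ ≤ (m.factorial : ℝ) * Real.exp (-(μ*δ^2/3)) :=
          mul_le_mul_of_nonneg_left (Real.exp_le_exp.mpr hexpineq) (Nat.cast_nonneg _)
  -- ASSEMBLY
  have hEcard : (E.card:ℝ) ≤ (Eup.card:ℝ) + (Elo.card:ℝ) := by
    have h := le_trans (Finset.card_le_card hsub) (Finset.card_union_le Eup Elo)
    exact_mod_cast h
  have hperm : ((Fintype.card (Equiv.Perm (Fin m))) : ℝ) = (m.factorial : ℝ) := by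
    rw [Fintype.card_perm, Fintype.card_fin]
  have hfacpos : (0:ℝ) < (m.factorial : ℝ) := by
    exact_mod_cast m.factorial_pos
  have hexpeq : -(μ*δ^2/3) = -((s:ℝ)*δ^2)/(6*(κ:ℝ)) := by
    rw [hμdef]; field_simp; ring
  rw [hperm, div_le_iff₀ hfacpos]
  calc (E.card : ℝ) ≤ (Eup.card:ℝ) + (Elo.card:ℝ) := hEcard
    _ ≤ 2 * ((m.factorial : ℝ) * Real.exp (-(μ*δ^2/3))) := by linarith
    _ = 2 * Real.exp (-((s:ℝ) * δ ^ 2) / (6 * (κ:ℝ))) * (m.factorial : ℝ) := by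
        rw [← hexpeq]; ring
end

section
/- (Good permutation lemma.) Let m, κ be positive integers with 2κ dividing m, let δ ∈ (0,1], and let A, B ⊆ Fin m with A ∩ B nonempty. Let σ be a permutation of Fin m drawn uniformly at random, let H = {t ∈ Fin m : t < m/2}, and for k ∈ {1,…,κ} let C_k = {t ∈ Fin m : m/2 + (k−1)·m/(2κ) ≤ t < m/2 + k·m/(2κ)}. Then with probability at least 1 − 2·exp(−δ²·|A|/6) − 2·exp(−δ²·|B|/6) − 2κ·exp(−δ²·|A∩B|/(6κ)), all of the following hold simultaneously: | |{t ∈ A : σ t ∈ H}| − |A|/2 | ≤ δ·|A|/2; | |{t ∈ B : σ t ∈ H}| − |B|/2 | ≤ δ·|B|/2; and for every k ∈ {1,…,κ}, | |{t ∈ A∩B : σ t ∈ C_k}| − |A∩B|/(2κ) | ≤ δ·|A∩B|/(2κ). -/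
open scoped Classical

open Finset Equiv
open Finset Equiv


section Counting
variable {α : Type*} [Fintype α] [DecidableEq α]

/-- Number of permutations fixing `T` pointwise. -/
lemma card_perm_fixing (T : Finset α) :
    (univ.filter fun σ : Perm α => ∀ t ∈ T, σ t = t).card
      = Nat.factorial (Fintype.card α - T.card) := by
  have h1 : (univ.filter fun σ : Perm α => ∀ t ∈ T, σ t = t).card
      = Fintype.card {σ : Perm α // ∀ t ∈ T, σ t = t} := (Fintype.card_subtype _).symm
  rw [h1]
  have e1 : {σ : Perm α // ∀ t ∈ T, σ t = t}
      ≃ {f : Perm α // ∀ a, ¬(a ∉ T) → f a = a} :=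
    Equiv.subtypeEquivRight (by
      intro f
      constructor
      · intro h a ha; exact h a (not_not.mp ha)
      · intro h t ht; exact h t (not_not_intro ht))
  have e2 : Perm {x : α // x ∉ T} ≃ {f : Perm α // ∀ a, ¬(a ∉ T) → f a = a} :=
    Equiv.Perm.subtypeEquivSubtypePerm _
  rw [Fintype.card_congr (e1.trans e2.symm), Fintype.card_perm]
  congr 1
  have : Fintype.card {x : α // x ∉ T} = Fintype.card α - Fintype.card {x : α // x ∈ T} :=
    Fintype.card_subtype_compl _
  rw [this, Fintype.card_coe]

/-- Number of permutations agreeing with a fixed permutation on `T`. -/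
lemma card_perm_eq_on (T : Finset α) (σ₀ : Perm α) :
    (univ.filter fun σ : Perm α => ∀ t ∈ T, σ t = σ₀ t).card
      = Nat.factorial (Fintype.card α - T.card) := by
  rw [← card_perm_fixing T]
  apply Finset.card_bij' (fun σ _ => σ₀⁻¹ * σ) (fun τ _ => σ₀ * τ)
  · intro σ hσ
    simp only [mem_filter, mem_univ, true_and] at hσ ⊢
    intro t ht
    simp [Perm.mul_apply, hσ t ht]
  · intro τ hτ
    simp only [mem_filter, mem_univ, true_and] at hτ ⊢
    intro t ht
    simp [Perm.mul_apply, hτ t ht]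
  · intro σ _; simp [mul_assoc]
  · intro τ _; simp [← mul_assoc]

/-- Any injective map defined on (the coercion of) a finset extends to a permutation. -/
lemma exists_perm_extend (T : Finset α) (g : {x : α // x ∈ T} → α)
    (hg : Function.Injective g) :
    ∃ σ : Perm α, ∀ t : {x : α // x ∈ T}, σ t = g t := by
  refine ⟨Equiv.extendSubtype (p := (· ∈ T)) (q := (· ∈ Set.range g))
    (Equiv.ofInjective g hg), fun t => ?_⟩
  rw [Equiv.extendSubtype_apply_of_mem _ _ t.2]
  simp [Equiv.ofInjective_apply]

end Counting



section Counting2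
variable {α : Type*} [Fintype α] [DecidableEq α]




/-- The number of permutations mapping `T` into `C`. -/
lemma card_perm_maps_into (T C : Finset α) :
    (univ.filter fun σ : Perm α => ∀ t ∈ T, σ t ∈ C).card
      = C.card.descFactorial T.card * Nat.factorial (Fintype.card α - T.card) := by
  set s := univ.filter fun σ : Perm α => ∀ t ∈ T, σ t ∈ C with hs
  set f : Perm α → ({x : α // x ∈ T} → α) := fun σ t => σ ↑t with hf
  set Gset : Finset ({x : α // x ∈ T} → α) :=
    univ.filter (fun g => Function.Injective g ∧ ∀ t, g t ∈ C) with hG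
  have hmaps : ∀ σ ∈ s, f σ ∈ Gset := by
    intro σ hσ
    simp only [hs, mem_filter, mem_univ, true_and] at hσ
    simp only [hG, mem_filter, mem_univ, true_and]
    exact ⟨fun a b h => Subtype.ext (σ.injective h), fun t => hσ t t.2⟩
  rw [Finset.card_eq_sum_card_fiberwise hmaps]
  have hfib : ∀ g ∈ Gset, (s.filter fun σ => f σ = g).card
      = Nat.factorial (Fintype.card α - T.card) := by
    intro g hg
    simp only [hG, mem_filter, mem_univ, true_and] at hg
    obtain ⟨σ₀, hσ₀⟩ := exists_perm_extend T g hg.1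
    have : (s.filter fun σ => f σ = g)
        = univ.filter fun σ : Perm α => ∀ t ∈ T, σ t = σ₀ t := by
      ext σ
      simp only [hs, mem_filter, mem_univ, true_and]
      constructor
      · rintro ⟨_, h2⟩ t ht
        have := congrFun h2 ⟨t, ht⟩
        simp only [hf] at this
        rw [this, hσ₀ ⟨t, ht⟩]
      · intro h
        constructor
        · intro t ht; rw [h t ht, hσ₀ ⟨t, ht⟩]; exact hg.2 ⟨t, ht⟩
        · funext t; simp only [hf]; rw [h t t.2, hσ₀ t]
    rw [this, card_perm_eq_on T σ₀]
  rw [Finset.sum_congr rfl hfib, Finset.sum_const, smul_eq_mul]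
  congr 1
  -- Gset.card = descFactorial
  have e : {g : {x : α // x ∈ T} → α // Function.Injective g ∧ ∀ t, g t ∈ C}
      ≃ ({x : α // x ∈ T} ↪ {x : α // x ∈ C}) :=
    { toFun := fun g => ⟨fun t => ⟨g.1 t, g.2.2 t⟩,
        fun a b h => g.2.1 (congrArg Subtype.val h)⟩
      invFun := fun e => ⟨fun t => ↑(e t),
        ⟨fun a b h => e.injective (Subtype.coe_injective h), fun t => (e t).2⟩⟩
      left_inv := fun g => rfl
      right_inv := fun e => by ext t; rfl }
  calc Gset.card = Fintype.card {g : {x : α // x ∈ T} → α //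
        Function.Injective g ∧ ∀ t, g t ∈ C} := (Fintype.card_subtype _).symm
    _ = Fintype.card ({x : α // x ∈ T} ↪ {x : α // x ∈ C}) := Fintype.card_congr e
    _ = C.card.descFactorial T.card := by
        rw [Fintype.card_embedding_eq, Fintype.card_coe, Fintype.card_coe]

end Counting2



section MGF
variable {α : Type*} [Fintype α] [DecidableEq α]


/-- Expansion of the "moment generating function" sum over all permutations. -/
lemma mgf_identity (S C : Finset α) (w : ℝ) :
    ∑ σ : Perm α, (1 + w) ^ (S.filter fun t => σ t ∈ C).card
      = ∑ j ∈ Finset.range (S.card + 1), (S.card.choose j : ℝ) * (w ^ j *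
          ((C.card.descFactorial j) * Nat.factorial (Fintype.card α - j))) := by
  have key : ∀ σ : Perm α, (1 + w : ℝ) ^ (S.filter fun t => σ t ∈ C).card
      = ∑ T ∈ S.powerset, (if ∀ t ∈ T, σ t ∈ C then w ^ T.card else 0) := by
    intro σ
    have h1 : (1 + w : ℝ) ^ (S.filter fun t => σ t ∈ C).card
        = ∏ t ∈ S, ((if σ t ∈ C then w else 0) + 1) := by
      rw [← Finset.prod_filter_mul_prod_filter_not S (fun t => σ t ∈ C)]
      have ha : ∏ t ∈ S.filter (fun t => σ t ∈ C), ((if σ t ∈ C then w else 0) + 1)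
          = (1 + w) ^ (S.filter fun t => σ t ∈ C).card := by
        rw [← Finset.prod_const]
        apply Finset.prod_congr rfl
        intro t ht
        rw [if_pos (Finset.mem_filter.mp ht).2]; ring
      have hb : ∏ t ∈ S.filter (fun t => ¬ σ t ∈ C), ((if σ t ∈ C then w else 0) + 1)
          = 1 := by
        apply Finset.prod_eq_one
        intro t ht
        rw [if_neg (Finset.mem_filter.mp ht).2]; ring
      rw [ha, hb, mul_one]
    rw [h1, Finset.prod_add]
    apply Finset.sum_congr rfl
    intro T hT
    by_cases h : ∀ t ∈ T, σ t ∈ C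
    · rw [if_pos h]
      have : ∏ i ∈ T, (if σ i ∈ C then w else 0) = ∏ i ∈ T, w :=
        Finset.prod_congr rfl (fun t ht => if_pos (h t ht))
      rw [this, Finset.prod_const, Finset.prod_const_one, mul_one]
    · rw [if_neg h]
      push_neg at h
      obtain ⟨t, ht, htc⟩ := h
      rw [Finset.prod_eq_zero ht (if_neg htc : (if σ t ∈ C then w else (0:ℝ)) = 0),
        zero_mul]
  calc ∑ σ : Perm α, (1 + w) ^ (S.filter fun t => σ t ∈ C).card
      = ∑ σ : Perm α, ∑ T ∈ S.powerset,
          (if ∀ t ∈ T, σ t ∈ C then w ^ T.card else 0) :=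
        Finset.sum_congr rfl (fun σ _ => key σ)
    _ = ∑ T ∈ S.powerset, ∑ σ : Perm α,
          (if ∀ t ∈ T, σ t ∈ C then w ^ T.card else 0) := Finset.sum_comm
    _ = ∑ T ∈ S.powerset, (w ^ T.card *
          ((C.card.descFactorial T.card) *
            Nat.factorial (Fintype.card α - T.card))) := by
        apply Finset.sum_congr rfl
        intro T _
        rw [← Finset.sum_filter, Finset.sum_const, nsmul_eq_mul,
          card_perm_maps_into T C]
        push_cast
        ring
    _ = _ := by
        rw [Finset.sum_powerset_apply_card
          (fun j => (w ^ j * ((C.card.descFactorial j) *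
            Nat.factorial (Fintype.card α - j)) : ℝ))]
        apply Finset.sum_congr rfl
        intro j _
        rw [nsmul_eq_mul]

/-- Key ℕ inequality: `descFactorial c j / descFactorial N j ≤ (c/N)^j`. -/
lemma descFactorial_mul_pow_le (c N : ℕ) (h : c ≤ N) :
    ∀ j : ℕ, c.descFactorial j * N ^ j ≤ N.descFactorial j * c ^ j := by
  intro j
  induction j with
  | zero => simp
  | succ j ih =>
    rw [Nat.descFactorial_succ, Nat.descFactorial_succ, pow_succ, pow_succ]
    have h1 : (c - j) * N ≤ (N - j) * c := by
      have hjc : j * c ≤ j * N := Nat.mul_le_mul_left j h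
      calc (c - j) * N = c * N - j * N := Nat.sub_mul _ _ _
        _ ≤ c * N - j * c := Nat.sub_le_sub_left hjc _
        _ = (N - j) * c := by rw [Nat.sub_mul, Nat.mul_comm c N]
    calc (c - j) * c.descFactorial j * (N ^ j * N)
        = ((c - j) * N) * (c.descFactorial j * N ^ j) := by ring
      _ ≤ ((N - j) * c) * (N.descFactorial j * c ^ j) := Nat.mul_le_mul h1 ih
      _ = (N - j) * N.descFactorial j * (c ^ j * c) := by ring
end MGF



section MGF2
variable {α : Type*} [Fintype α] [DecidableEq α]



lemma mgf_le_of_nonneg (S C : Finset α) (hN : 0 < Fintype.card α) (w : ℝ) (hw : 0 ≤ w) :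
    ∑ σ : Perm α, (1 + w) ^ (S.filter fun t => σ t ∈ C).card
      ≤ (Nat.factorial (Fintype.card α) : ℝ) *
        (1 + w * C.card / Fintype.card α) ^ S.card := by
  set N := Fintype.card α with hNdef
  have hrhs : (Nat.factorial N : ℝ) * (1 + w * C.card / N) ^ S.card
      = ∑ j ∈ Finset.range (S.card + 1),
          (S.card.choose j : ℝ) * ((w * C.card / N) ^ j * Nat.factorial N) := by
    have := add_pow (w * C.card / N : ℝ) 1 S.card
    simp only [one_pow, mul_one] at this
    rw [add_comm (w * C.card / N : ℝ) 1] at this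
    rw [this, Finset.mul_sum]
    apply Finset.sum_congr rfl
    intro j _
    ring
  rw [mgf_identity S C w, hrhs]
  apply Finset.sum_le_sum
  intro j hj
  have hjN : j ≤ N := by
    have h1 : j ≤ S.card := Nat.lt_succ_iff.mp (Finset.mem_range.mp hj)
    exact h1.trans (Finset.card_le_univ S)
  apply mul_le_mul_of_nonneg_left _ (Nat.cast_nonneg _)
  rw [div_pow, mul_pow]
  have hNpow : (0:ℝ) < (N:ℝ) ^ j := pow_pos (by exact_mod_cast hN) j
  have key : ((C.card.descFactorial j : ℝ) * (Nat.factorial (Fintype.card α - j) : ℝ))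
      ≤ (C.card : ℝ) ^ j * (Nat.factorial N : ℝ) / (N:ℝ) ^ j := by
    rw [le_div_iff₀ hNpow]
    have hfact : ((Nat.factorial N : ℕ) : ℝ)
        = ((Nat.factorial (N - j) : ℕ) : ℝ) * (N.descFactorial j : ℝ) := by
      exact_mod_cast congrArg (Nat.cast (R := ℝ)) (Nat.factorial_mul_descFactorial hjN).symm
    have hmain : ((C.card.descFactorial j : ℕ) : ℝ) * (N:ℝ) ^ j
        ≤ ((N.descFactorial j : ℕ) : ℝ) * (C.card : ℝ) ^ j := by
      exact_mod_cast descFactorial_mul_pow_le C.card N (Finset.card_le_univ C) j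
    have hNj : (Fintype.card α - j) = N - j := rfl
    rw [hNj, hfact]
    have hnn : (0:ℝ) ≤ ((Nat.factorial (N - j) : ℕ) : ℝ) := Nat.cast_nonneg _
    nlinarith [mul_le_mul_of_nonneg_right hmain hnn]
  calc w ^ j * ((C.card.descFactorial j : ℝ) * (Nat.factorial (Fintype.card α - j) : ℝ))
      ≤ w ^ j * ((C.card : ℝ) ^ j * (Nat.factorial N : ℝ) / (N:ℝ) ^ j) :=
        mul_le_mul_of_nonneg_left key (pow_nonneg hw j)
    _ = w ^ j * (C.card : ℝ) ^ j / (N:ℝ) ^ j * (Nat.factorial N : ℝ) := by ring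

end MGF2



section MGF3
variable {α : Type*} [Fintype α] [DecidableEq α]


lemma mgf_le_all (S C : Finset α) (hN : 0 < Fintype.card α) (z : ℝ) (hz : 0 < z) :
    ∑ σ : Perm α, z ^ (S.filter fun t => σ t ∈ C).card
      ≤ (Nat.factorial (Fintype.card α) : ℝ) *
        (1 + (z - 1) * C.card / Fintype.card α) ^ S.card := by
  set N := Fintype.card α with hNdef
  have hNR : (0:ℝ) < (N:ℝ) := by exact_mod_cast hN
  rcases le_or_gt 1 z with h1 | h1
  · have h := mgf_le_of_nonneg S C hN (z - 1) (by linarith)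
    have : (1 : ℝ) + (z - 1) = z := by ring
    rwa [this] at h
  · have hzne : z ≠ 0 := ne_of_gt hz
    have hX : ∀ σ : Perm α, z ^ (S.filter fun t => σ t ∈ C).card
        = z ^ S.card * (1 + (1/z - 1)) ^ ((S.filter fun t => σ t ∈ Cᶜ).card) := by
      intro σ
      have h1z : (1 : ℝ) + (1/z - 1) = 1/z := by ring
      have hsplit : (S.filter fun t => σ t ∈ C).card
          + (S.filter fun t => σ t ∈ Cᶜ).card = S.card := by
        have : (S.filter fun t => σ t ∈ Cᶜ) = (S.filter fun t => ¬ (σ t ∈ C)) := by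
          apply Finset.filter_congr; intro t _; simp [Finset.mem_compl]
        rw [this]
        exact Finset.card_filter_add_card_filter_not _
      rw [h1z, ← hsplit, pow_add, one_div, inv_pow, mul_assoc,
        mul_inv_cancel₀ (pow_ne_zero _ hzne), mul_one]
    calc ∑ σ : Perm α, z ^ (S.filter fun t => σ t ∈ C).card
        = z ^ S.card * ∑ σ : Perm α,
            (1 + (1/z - 1)) ^ ((S.filter fun t => σ t ∈ Cᶜ).card) := by
          rw [Finset.mul_sum]; exact Finset.sum_congr rfl (fun σ _ => hX σ)
      _ ≤ z ^ S.card * ((Nat.factorial N : ℝ) *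
            (1 + (1/z - 1) * (Cᶜ).card / N) ^ S.card) := by
          apply mul_le_mul_of_nonneg_left _ (pow_nonneg hz.le _)
          exact mgf_le_of_nonneg S Cᶜ hN (1/z - 1)
            (by rw [le_sub_iff_add_le, zero_add, le_div_iff₀ hz, one_mul]; exact h1.le)
      _ = (Nat.factorial N : ℝ) * (z * (1 + (1/z - 1) * (Cᶜ).card / N)) ^ S.card := by
          rw [mul_pow]; ring
      _ = (Nat.factorial N : ℝ) * (1 + (z - 1) * C.card / N) ^ S.card := by
          congr 2
          have hcompl : ((Cᶜ : Finset α).card : ℝ) = (N:ℝ) - C.card := by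
            rw [Finset.card_compl]
            exact_mod_cast Nat.cast_sub (Finset.card_le_univ C)
          rw [hcompl]
          field_simp
          ring

lemma mgf_le_exp (S C : Finset α) (hN : 0 < Fintype.card α) (z : ℝ) (hz : 0 < z) :
    ∑ σ : Perm α, z ^ (S.filter fun t => σ t ∈ C).card
      ≤ (Nat.factorial (Fintype.card α) : ℝ) *
        Real.exp ((z - 1) * (S.card * C.card / Fintype.card α)) := by
  set N := Fintype.card α with hNdef
  have hNR : (0:ℝ) < (N:ℝ) := by exact_mod_cast hN
  refine (mgf_le_all S C hN z hz).trans ?_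
  apply mul_le_mul_of_nonneg_left _ (Nat.cast_nonneg _)
  have hbase0 : (0:ℝ) ≤ 1 + (z - 1) * C.card / N := by
    have hcN : (C.card : ℝ) ≤ N := by exact_mod_cast Finset.card_le_univ C
    rcases le_or_gt 1 z with h | h
    · have : (0:ℝ) ≤ (z - 1) * C.card / N :=
        div_nonneg (mul_nonneg (by linarith) (Nat.cast_nonneg _)) hNR.le
      linarith
    · have h1 : (z - 1) * C.card / N = (z*C.card - C.card)/N := by ring
      have h2 : ((C.card:ℝ) - z * C.card)/N ≤ 1 := by
        rw [div_le_one hNR]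
        nlinarith [Nat.cast_nonneg (α := ℝ) C.card]
      rw [h1]
      have : ((z*C.card - C.card : ℝ))/N = -(((C.card:ℝ) - z*C.card)/N) := by ring
      rw [this]; linarith
  calc (1 + (z - 1) * C.card / N : ℝ) ^ S.card
      ≤ (Real.exp ((z - 1) * C.card / N)) ^ S.card := by
        apply pow_le_pow_left₀ hbase0
        have := Real.add_one_le_exp ((z - 1) * C.card / N)
        linarith
    _ = Real.exp ((z - 1) * (S.card * C.card / N)) := by
        rw [← Real.exp_nat_mul]
        congr 1
        ring

end MGF3

section CalcLemmas

lemma calc_upper (δ : ℝ) (h0 : 0 ≤ δ) (h1 : δ ≤ 1) :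
    δ - (1 + δ) * Real.log (1 + δ) ≤ -δ^2 / 3 := by
  set f : ℝ → ℝ := fun x => (1+x) * Real.log (1+x) - x - x^2/3 with hf
  have hlog23 : (2:ℝ)/3 ≤ Real.log 2 := by
    have := Real.log_two_gt_d9
    linarith
  have hcont : ContinuousOn f (Set.Icc 0 1) := by
    have c1 : ContinuousOn (fun x : ℝ => Real.log (1+x)) (Set.Icc 0 1) := by
      apply Real.continuousOn_log.comp (by fun_prop)
      intro x hx
      simp only [Set.mem_Icc] at hx
      simp only [Set.mem_compl_iff, Set.mem_singleton_iff]
      intro hcontra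
      linarith [hx.1]
    exact ((ContinuousOn.mul (by fun_prop) c1).sub (by fun_prop)).sub (by fun_prop)
  have hderiv : ∀ x ∈ Set.Ioo (0:ℝ) 1, HasDerivAt f (Real.log (1+x) - 2*x/3) x := by
    intro x hx
    have h1x : (0:ℝ) < 1 + x := by linarith [hx.1]
    have h₁ : HasDerivAt (fun y : ℝ => 1+y) 1 x := by
      simpa using (hasDerivAt_id x).const_add (1:ℝ)
    have h₂ : HasDerivAt (fun y : ℝ => Real.log (1+y)) (1/(1+x)) x := by
      exact h₁.log (ne_of_gt h1x)
    have h₃ : HasDerivAt (fun y : ℝ => (1+y) * Real.log (1+y))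
        (1 * Real.log (1+x) + (1+x) * (1/(1+x))) x := h₁.mul h₂
    have h₅ : HasDerivAt (fun y : ℝ => y^2/3) (2*x/3) x := by
      have := (hasDerivAt_pow 2 x).div_const 3
      simpa using this
    have h₆ := (h₃.sub (hasDerivAt_id x)).sub h₅
    refine h₆.congr_deriv ?_
    have hne : (1+x) * (1/(1+x)) = 1 := by field_simp
    rw [hne]
    ring
  have hmono : MonotoneOn f (Set.Icc 0 1) := by
    apply monotoneOn_of_deriv_nonneg (convex_Icc 0 1) hcont
    · intro x hx
      rw [interior_Icc] at hx
      exact (hderiv x hx).differentiableAt.differentiableWithinAt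
    · intro x hx
      rw [interior_Icc] at hx
      rw [(hderiv x hx).deriv]
      have hcon := (strictConcaveOn_log_Ioi.concaveOn).2 (Set.mem_Ioi.mpr one_pos)
        (Set.mem_Ioi.mpr two_pos) (show (0:ℝ) ≤ 1 - x by linarith [hx.2])
        (show (0:ℝ) ≤ x by linarith [hx.1]) (show (1-x) + x = 1 by ring)
      simp only [smul_eq_mul, Real.log_one, mul_zero, mul_one, zero_add] at hcon
      have heq : 1 - x + x * 2 = 1 + x := by ring
      rw [heq] at hcon
      have : 2*x/3 ≤ x * Real.log 2 := by
        have := mul_le_mul_of_nonneg_left hlog23 (le_of_lt hx.1)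
        linarith
      linarith
  have h00 : f 0 = 0 := by simp [hf]
  have := hmono (Set.mem_Icc.mpr ⟨le_refl 0, zero_le_one⟩) (Set.mem_Icc.mpr ⟨h0, h1⟩) h0
  rw [h00] at this
  simp only [hf] at this
  linarith

lemma calc_lower (δ : ℝ) (h0 : 0 ≤ δ) (h1 : δ < 1) :
    -δ - (1 - δ) * Real.log (1 - δ) ≤ -δ^2 / 3 := by
  set f : ℝ → ℝ := fun x => x + (1-x) * Real.log (1-x) - x^2/3 with hf
  have hcont : ContinuousOn f (Set.Icc 0 δ) := by
    have c1 : ContinuousOn (fun x : ℝ => Real.log (1-x)) (Set.Icc 0 δ) := by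
      apply Real.continuousOn_log.comp (by fun_prop)
      intro x hx
      simp only [Set.mem_Icc] at hx
      simp only [Set.mem_compl_iff, Set.mem_singleton_iff]
      intro hcontra
      have : x < 1 := lt_of_le_of_lt hx.2 h1
      linarith
    exact ((continuousOn_id.add (ContinuousOn.mul (by fun_prop) c1))).sub (by fun_prop)
  have hderiv : ∀ x ∈ Set.Ioo (0:ℝ) δ, HasDerivAt f (-Real.log (1-x) - 2*x/3) x := by
    intro x hx
    have h1x : (0:ℝ) < 1 - x := by
      have : x < 1 := lt_of_lt_of_le hx.2 h1.le
      linarith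
    have h₁ : HasDerivAt (fun y : ℝ => 1-y) (-1) x := by
      simpa using (hasDerivAt_id x).const_sub (1:ℝ)
    have h₂ : HasDerivAt (fun y : ℝ => Real.log (1-y)) ((1-x)⁻¹ * (-1)) x := by
      have := h₁.log (ne_of_gt h1x)
      exact this.congr_deriv (by ring)
    have h₃ : HasDerivAt (fun y : ℝ => (1-y) * Real.log (1-y))
        ((-1) * Real.log (1-x) + (1-x) * ((1-x)⁻¹ * (-1))) x := h₁.mul h₂
    have h₅ : HasDerivAt (fun y : ℝ => y^2/3) (2*x/3) x := by
      have := (hasDerivAt_pow 2 x).div_const 3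
      simpa using this
    have h₆ := ((hasDerivAt_id x).add h₃).sub h₅
    refine h₆.congr_deriv ?_
    have hne : (1-x) * ((1-x)⁻¹ * (-1)) = -1 := by field_simp
    rw [hne]
    ring
  have hmono : MonotoneOn f (Set.Icc 0 δ) := by
    apply monotoneOn_of_deriv_nonneg (convex_Icc 0 δ) hcont
    · intro x hx
      rw [interior_Icc] at hx
      exact (hderiv x hx).differentiableAt.differentiableWithinAt
    · intro x hx
      rw [interior_Icc] at hx
      rw [(hderiv x hx).deriv]
      have h1x : (0:ℝ) < 1 - x := by
        have : x < 1 := lt_of_lt_of_le hx.2 h1.le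
        linarith
      have hlog : Real.log (1-x) ≤ -x := by
        have := Real.log_le_sub_one_of_pos h1x
        linarith
      linarith [hx.1]
  have h00 : f 0 = 0 := by simp [hf]
  have := hmono (Set.mem_Icc.mpr ⟨le_refl 0, h0⟩) (Set.mem_Icc.mpr ⟨h0, le_refl δ⟩) h0
  rw [h00] at this
  simp only [hf] at this
  linarith

end CalcLemmas



section Tails
variable {α : Type*} [Fintype α] [DecidableEq α]




lemma pow_eq_exp (z : ℝ) (hz : 0 < z) (k : ℕ) : z ^ k = Real.exp (k * Real.log z) := by
  rw [← Real.exp_log hz, ← Real.exp_nat_mul, Real.log_exp]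

lemma tail_up (S C : Finset α) (hN : 0 < Fintype.card α)
    (δ : ℝ) (hδ0 : 0 < δ) (hδ1 : δ ≤ 1) :
    ((univ.filter fun σ : Perm α =>
        (1 + δ) * ((S.card : ℝ) * C.card / Fintype.card α)
          < ((S.filter fun t => σ t ∈ C).card : ℝ)).card : ℝ)
      ≤ (Nat.factorial (Fintype.card α) : ℝ) *
          Real.exp (-δ^2 * ((S.card : ℝ) * C.card / Fintype.card α) / 3) := by
  set N := Fintype.card α with hNdef
  set μ : ℝ := (S.card : ℝ) * C.card / N with hμdef
  have hμ0 : 0 ≤ μ := by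
    apply div_nonneg (mul_nonneg (Nat.cast_nonneg _) (Nat.cast_nonneg _)) (Nat.cast_nonneg _)
  have h1δ : (0:ℝ) < 1 + δ := by linarith
  have hlogpos : 0 ≤ Real.log (1 + δ) := Real.log_nonneg (by linarith)
  have hmgf := mgf_le_exp S C hN (1 + δ) h1δ
  have heq : ((1 + δ) - 1) * ((S.card : ℝ) * C.card / N) = δ * μ := by rw [hμdef]; ring
  rw [heq] at hmgf
  set E : Finset (Perm α) := univ.filter fun σ : Perm α =>
    (1 + δ) * μ < ((S.filter fun t => σ t ∈ C).card : ℝ) with hE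
  have hkey : (E.card : ℝ) * Real.exp ((1 + δ) * μ * Real.log (1 + δ))
      ≤ (Nat.factorial N : ℝ) * Real.exp (δ * μ) := by
    calc (E.card : ℝ) * Real.exp ((1 + δ) * μ * Real.log (1 + δ))
        = ∑ _σ ∈ E, Real.exp ((1 + δ) * μ * Real.log (1 + δ)) := by
          rw [Finset.sum_const, nsmul_eq_mul]
      _ ≤ ∑ σ ∈ E, (1 + δ) ^ (S.filter fun t => σ t ∈ C).card := by
          apply Finset.sum_le_sum
          intro σ hσ
          rw [pow_eq_exp _ h1δ]
          apply Real.exp_le_exp.mpr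
          have hlt : (1 + δ) * μ ≤ ((S.filter fun t => σ t ∈ C).card : ℝ) := by
            have := (Finset.mem_filter.mp hσ).2
            linarith
          exact mul_le_mul_of_nonneg_right hlt hlogpos
      _ ≤ ∑ σ : Perm α, (1 + δ) ^ (S.filter fun t => σ t ∈ C).card := by
          apply Finset.sum_le_sum_of_subset_of_nonneg (Finset.filter_subset _ _)
          intro σ _ _
          exact pow_nonneg h1δ.le _
      _ ≤ _ := hmgf
  have hdiv : (E.card : ℝ) ≤ (Nat.factorial N : ℝ) *
      Real.exp (δ * μ - (1 + δ) * μ * Real.log (1 + δ)) := by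
    rw [Real.exp_sub, ← mul_div_assoc]
    rw [le_div_iff₀ (Real.exp_pos _)]
    exact hkey
  refine hdiv.trans ?_
  apply mul_le_mul_of_nonneg_left _ (Nat.cast_nonneg _)
  apply Real.exp_le_exp.mpr
  have h := calc_upper δ hδ0.le hδ1
  have := mul_le_mul_of_nonneg_left h hμ0
  calc δ * μ - (1 + δ) * μ * Real.log (1 + δ)
      = μ * (δ - (1 + δ) * Real.log (1 + δ)) := by ring
    _ ≤ μ * (-δ^2 / 3) := this
    _ = -δ^2 * μ / 3 := by ring

lemma tail_low (S C : Finset α) (hN : 0 < Fintype.card α)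
    (δ : ℝ) (hδ0 : 0 < δ) (hδ1 : δ ≤ 1) :
    ((univ.filter fun σ : Perm α =>
        ((S.filter fun t => σ t ∈ C).card : ℝ)
          < (1 - δ) * ((S.card : ℝ) * C.card / Fintype.card α)).card : ℝ)
      ≤ (Nat.factorial (Fintype.card α) : ℝ) *
          Real.exp (-δ^2 * ((S.card : ℝ) * C.card / Fintype.card α) / 3) := by
  set N := Fintype.card α with hNdef
  set μ : ℝ := (S.card : ℝ) * C.card / N with hμdef
  have hμ0 : 0 ≤ μ := by
    apply div_nonneg (mul_nonneg (Nat.cast_nonneg _) (Nat.cast_nonneg _)) (Nat.cast_nonneg _)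
  rcases eq_or_lt_of_le hδ1 with hδeq | hδlt
  · -- δ = 1 : the event is empty
    have : (univ.filter fun σ : Perm α =>
        ((S.filter fun t => σ t ∈ C).card : ℝ) < (1 - δ) * μ) = ∅ := by
      apply Finset.filter_eq_empty_iff.mpr
      intro σ _
      rw [← hδeq]
      simp only [sub_self, zero_mul, not_lt]
      exact Nat.cast_nonneg _
    rw [this]
    simp only [Finset.card_empty, Nat.cast_zero]
    positivity
  · have hz : (0:ℝ) < 1 - δ := by linarith
    have hz1 : (1:ℝ) - δ < 1 := by linarith
    have hlogneg : Real.log (1 - δ) ≤ 0 :=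
      Real.log_nonpos hz.le (by linarith)
    have hmgf := mgf_le_exp S C hN (1 - δ) hz
    have heq : ((1 - δ) - 1) * ((S.card : ℝ) * C.card / N) = -δ * μ := by
      rw [hμdef]; ring
    rw [heq] at hmgf
    set E : Finset (Perm α) := univ.filter fun σ : Perm α =>
      ((S.filter fun t => σ t ∈ C).card : ℝ) < (1 - δ) * μ with hE
    have hkey : (E.card : ℝ) * Real.exp ((1 - δ) * μ * Real.log (1 - δ))
        ≤ (Nat.factorial N : ℝ) * Real.exp (-δ * μ) := by
      calc (E.card : ℝ) * Real.exp ((1 - δ) * μ * Real.log (1 - δ))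
          = ∑ _σ ∈ E, Real.exp ((1 - δ) * μ * Real.log (1 - δ)) := by
            rw [Finset.sum_const, nsmul_eq_mul]
        _ ≤ ∑ σ ∈ E, (1 - δ) ^ (S.filter fun t => σ t ∈ C).card := by
            apply Finset.sum_le_sum
            intro σ hσ
            rw [pow_eq_exp _ hz]
            apply Real.exp_le_exp.mpr
            have hlt : ((S.filter fun t => σ t ∈ C).card : ℝ) ≤ (1 - δ) * μ := by
              have := (Finset.mem_filter.mp hσ).2
              linarith
            exact mul_le_mul_of_nonpos_right hlt hlogneg
        _ ≤ ∑ σ : Perm α, (1 - δ) ^ (S.filter fun t => σ t ∈ C).card := by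
            apply Finset.sum_le_sum_of_subset_of_nonneg (Finset.filter_subset _ _)
            intro σ _ _
            exact pow_nonneg hz.le _
        _ ≤ _ := hmgf
    have hdiv : (E.card : ℝ) ≤ (Nat.factorial N : ℝ) *
        Real.exp (-δ * μ - (1 - δ) * μ * Real.log (1 - δ)) := by
      rw [Real.exp_sub, ← mul_div_assoc]
      rw [le_div_iff₀ (Real.exp_pos _)]
      exact hkey
    refine hdiv.trans ?_
    apply mul_le_mul_of_nonneg_left _ (Nat.cast_nonneg _)
    apply Real.exp_le_exp.mpr
    have h := calc_lower δ hδ0.le hδlt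
    have := mul_le_mul_of_nonneg_left h hμ0
    calc -δ * μ - (1 - δ) * μ * Real.log (1 - δ)
        = μ * (-δ - (1 - δ) * Real.log (1 - δ)) := by ring
      _ ≤ μ * (-δ^2 / 3) := this
      _ = -δ^2 * μ / 3 := by ring

/-- Two sided tail bound. -/
lemma tail_bound (S C : Finset α) (hN : 0 < Fintype.card α)
    (δ : ℝ) (hδ0 : 0 < δ) (hδ1 : δ ≤ 1) :
    ((univ.filter fun σ : Perm α =>
        ¬ |((S.filter fun t => σ t ∈ C).card : ℝ)
            - (S.card : ℝ) * C.card / Fintype.card α|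
          ≤ δ * ((S.card : ℝ) * C.card / Fintype.card α)).card : ℝ)
      ≤ 2 * (Nat.factorial (Fintype.card α) : ℝ) *
          Real.exp (-δ^2 * ((S.card : ℝ) * C.card / Fintype.card α) / 3) := by
  have hsub : (univ.filter fun σ : Perm α =>
      ¬ |((S.filter fun t => σ t ∈ C).card : ℝ)
          - (S.card : ℝ) * C.card / Fintype.card α|
        ≤ δ * ((S.card : ℝ) * C.card / Fintype.card α))
      ⊆ (univ.filter fun σ : Perm α =>
          (1 + δ) * ((S.card : ℝ) * C.card / Fintype.card α)
            < ((S.filter fun t => σ t ∈ C).card : ℝ))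
        ∪ (univ.filter fun σ : Perm α =>
          ((S.filter fun t => σ t ∈ C).card : ℝ)
            < (1 - δ) * ((S.card : ℝ) * C.card / Fintype.card α)) := by
    intro σ hσ
    simp only [Finset.mem_filter, Finset.mem_univ, true_and, not_le] at hσ
    rw [Finset.mem_union]
    simp only [Finset.mem_filter, Finset.mem_univ, true_and]
    by_contra hcon
    push_neg at hcon
    obtain ⟨h1, h2⟩ := hcon
    have e1 : (1 + δ) * ((S.card : ℝ) * C.card / Fintype.card α)
        = ((S.card : ℝ) * C.card / Fintype.card α)
          + δ * ((S.card : ℝ) * C.card / Fintype.card α) := by ring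
    have e2 : (1 - δ) * ((S.card : ℝ) * C.card / Fintype.card α)
        = ((S.card : ℝ) * C.card / Fintype.card α)
          - δ * ((S.card : ℝ) * C.card / Fintype.card α) := by ring
    rw [e1] at h1
    rw [e2] at h2
    have : |((S.filter fun t => σ t ∈ C).card : ℝ)
        - (S.card : ℝ) * C.card / Fintype.card α|
        ≤ δ * ((S.card : ℝ) * C.card / Fintype.card α) := by
      rw [abs_le]
      constructor <;> linarith
    linarith
  have hcard2 := (Finset.card_union_le _ _).trans' (Finset.card_le_card hsub)
  have hc2 : ((univ.filter fun σ : Perm α =>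
      ¬ |((S.filter fun t => σ t ∈ C).card : ℝ)
          - (S.card : ℝ) * C.card / Fintype.card α|
        ≤ δ * ((S.card : ℝ) * C.card / Fintype.card α)).card : ℝ)
      ≤ ((univ.filter fun σ : Perm α =>
          (1 + δ) * ((S.card : ℝ) * C.card / Fintype.card α)
            < ((S.filter fun t => σ t ∈ C).card : ℝ)).card : ℝ)
        + ((univ.filter fun σ : Perm α =>
          ((S.filter fun t => σ t ∈ C).card : ℝ)
            < (1 - δ) * ((S.card : ℝ) * C.card / Fintype.card α)).card : ℝ) := by
    exact_mod_cast hcard2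
  linarith [tail_up S C hN δ hδ0 hδ1, tail_low S C hN δ hδ0 hδ1]



lemma card_fin_val_lt (m r : ℕ) (h : r ≤ m) :
    (univ.filter fun x : Fin m => (x:ℕ) < r).card = r := by
  have key : (univ.filter fun x : Fin m => (x:ℕ) < r).card = (Finset.range r).card := by
    refine Finset.card_bij' (fun (x : Fin m) _ => (x : ℕ))
      (fun y hy => (⟨y, lt_of_lt_of_le (Finset.mem_range.mp hy) h⟩ : Fin m)) ?_ ?_ ?_ ?_
    · intro a ha
      simp only [Finset.mem_filter] at ha
      exact Finset.mem_range.mpr ha.2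
    · intro y hy
      simp only [Finset.mem_filter, Finset.mem_univ, true_and]
      exact Finset.mem_range.mp hy
    · intro a _; rfl
    · intro y _; rfl
  rw [key, Finset.card_range]

lemma card_fin_val_Ico (m L R : ℕ) (h : R ≤ m) :
    (univ.filter fun x : Fin m => L ≤ (x:ℕ) ∧ (x:ℕ) < R).card = R - L := by
  have key : (univ.filter fun x : Fin m => L ≤ (x:ℕ) ∧ (x:ℕ) < R).card
      = (Finset.Ico L R).card := by
    refine Finset.card_bij' (fun (x : Fin m) _ => (x : ℕ))
      (fun y hy => (⟨y, lt_of_lt_of_le (Finset.mem_Ico.mp hy).2 h⟩ : Fin m)) ?_ ?_ ?_ ?_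
    · intro a ha
      simp only [Finset.mem_filter] at ha
      exact Finset.mem_Ico.mpr ha.2
    · intro y hy
      simp only [Finset.mem_filter, Finset.mem_univ, true_and]
      exact Finset.mem_Ico.mp hy
    · intro a _; rfl
    · intro y _; rfl
  rw [key, Nat.card_Ico]




lemma eventH_bound (m : ℕ) (hm : 0 < m) (hm2 : 2 ∣ m)
    (δ : ℝ) (hδ0 : 0 < δ) (hδ1 : δ ≤ 1) (A : Finset (Fin m)) :
    ((univ.filter fun σ : Perm (Fin m) =>
        ¬ |((A.filter (fun t => ((σ t : ℕ) < m / 2))).card : ℝ) - (A.card : ℝ) / 2|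
            ≤ δ * (A.card : ℝ) / 2).card : ℝ)
      ≤ (Nat.factorial m : ℝ) * (2 * Real.exp (-(δ ^ 2 * (A.card : ℝ)) / 6)) := by
  have hN : 0 < Fintype.card (Fin m) := by simpa using hm
  have hmR : (0:ℝ) < (m:ℝ) := by exact_mod_cast hm
  set CH : Finset (Fin m) := univ.filter (fun x : Fin m => (x:ℕ) < m/2) with hCHdef
  have ht := tail_bound A CH hN δ hδ0 hδ1
  simp only [Fintype.card_fin] at ht
  have hc : CH.card = m/2 := card_fin_val_lt m _ (Nat.div_le_self _ _)
  have hcR : ((CH.card : ℕ) : ℝ) = (m:ℝ)/2 := by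
    rw [hc]; exact Nat.cast_div hm2 two_ne_zero
  have hμ : (A.card:ℝ) * (CH.card : ℝ) / (m:ℝ) = (A.card:ℝ)/2 := by
    rw [hcR]; field_simp
  have hsets : (univ.filter fun σ : Perm (Fin m) =>
      ¬ |((A.filter fun t => σ t ∈ CH).card : ℝ)
          - (A.card:ℝ) * (CH.card : ℝ) / (m:ℝ)|
        ≤ δ * ((A.card:ℝ) * (CH.card : ℝ) / (m:ℝ)))
      = (univ.filter fun σ : Perm (Fin m) =>
        ¬ |((A.filter (fun t => ((σ t : ℕ) < m / 2))).card : ℝ) - (A.card : ℝ) / 2|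
            ≤ δ * (A.card : ℝ) / 2) := by
    apply Finset.filter_congr
    intro σ _
    have hfe : (A.filter fun t => σ t ∈ CH) = A.filter (fun t => ((σ t : ℕ) < m/2)) := by
      apply Finset.filter_congr
      intro t _
      simp [hCHdef]
    rw [hfe, hμ, ← mul_div_assoc]
  rw [hsets] at ht
  refine ht.trans (le_of_eq ?_)
  have harg : -δ^2 * ((A.card:ℝ) * (CH.card : ℝ) / (m:ℝ))/3
      = -(δ^2 * (A.card:ℝ))/6 := by
    rw [hcR]; field_simp; ring
  rw [harg]; ring

lemma eventC_bound (m κ k : ℕ) (hm : 0 < m) (hκ : 0 < κ) (hdiv : 2 * κ ∣ m)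
    (hk1 : 1 ≤ k) (hkκ : k ≤ κ)
    (δ : ℝ) (hδ0 : 0 < δ) (hδ1 : δ ≤ 1) (S : Finset (Fin m)) :
    ((univ.filter fun σ : Perm (Fin m) =>
        ¬ |((S.filter (fun t =>
              m / 2 + (k - 1) * (m / (2 * κ)) ≤ (σ t : ℕ) ∧
                (σ t : ℕ) < m / 2 + k * (m / (2 * κ)))).card : ℝ)
            - (S.card : ℝ) / (2 * κ)|
            ≤ δ * (S.card : ℝ) / (2 * κ)).card : ℝ)
      ≤ (Nat.factorial m : ℝ) * (2 * Real.exp (-(δ ^ 2 * (S.card : ℝ)) / (6 * κ))) := by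
  have hN : 0 < Fintype.card (Fin m) := by simpa using hm
  have hmR : (0:ℝ) < (m:ℝ) := by exact_mod_cast hm
  have hκR : (0:ℝ) < (κ:ℝ) := by exact_mod_cast hκ
  set q := m / (2 * κ) with hqdef
  have hq2 : q * (2 * κ) = m := Nat.div_mul_cancel hdiv
  have hm_eq : m = 2 * (κ * q) := by rw [← hq2]; ring
  have hhalf : m / 2 = κ * q := by rw [hm_eq]; exact Nat.mul_div_cancel_left _ (by norm_num)
  have h2half : m / 2 + m / 2 = m := by rw [hhalf, hm_eq]; ring
  set L := m / 2 + (k - 1) * q with hLdef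
  set R := m / 2 + k * q with hRdef
  have hkqh : k * q ≤ m / 2 := by rw [hhalf]; exact Nat.mul_le_mul_right q hkκ
  have hRm : R ≤ m := by
    have h' := Nat.add_le_add_left hkqh (m / 2)
    rw [h2half] at h'
    exact h'
  have hkq : k * q = (k - 1) * q + q := by
    have hk : (k - 1) + 1 = k := Nat.succ_pred_eq_of_pos hk1
    calc k * q = ((k - 1) + 1) * q := by rw [hk]
      _ = (k - 1) * q + q := by ring
  set CC : Finset (Fin m) := univ.filter (fun x : Fin m => L ≤ (x:ℕ) ∧ (x:ℕ) < R)
    with hCCdef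
  have hc : CC.card = q := by
    rw [hCCdef, card_fin_val_Ico m L R hRm, hLdef, hRdef]
    rw [Nat.add_sub_add_left, hkq, Nat.add_sub_cancel_left]
  have hcR : ((CC.card : ℕ) : ℝ) = (m:ℝ) / (2 * (κ:ℝ)) := by
    rw [hc, hqdef]
    rw [Nat.cast_div hdiv (by exact_mod_cast (Nat.mul_pos two_pos hκ).ne')]
    push_cast
    ring
  have hμ : (S.card:ℝ) * (CC.card : ℝ) / (m:ℝ) = (S.card:ℝ) / (2 * (κ:ℝ)) := by
    rw [hcR, show (S.card:ℝ) * ((m:ℝ) / (2 * (κ:ℝ))) / (m:ℝ)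
      = (S.card:ℝ) / (2 * (κ:ℝ)) * ((m:ℝ) / (m:ℝ)) by ring, div_self hmR.ne', mul_one]
  have ht := tail_bound S CC hN δ hδ0 hδ1
  simp only [Fintype.card_fin] at ht
  have hsets : (univ.filter fun σ : Perm (Fin m) =>
      ¬ |((S.filter fun t => σ t ∈ CC).card : ℝ)
          - (S.card:ℝ) * (CC.card : ℝ) / (m:ℝ)|
        ≤ δ * ((S.card:ℝ) * (CC.card : ℝ) / (m:ℝ)))
      = (univ.filter fun σ : Perm (Fin m) =>
        ¬ |((S.filter (fun t =>
              m / 2 + (k - 1) * (m / (2 * κ)) ≤ (σ t : ℕ) ∧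
                (σ t : ℕ) < m / 2 + k * (m / (2 * κ)))).card : ℝ)
            - (S.card : ℝ) / (2 * κ)|
            ≤ δ * (S.card : ℝ) / (2 * κ)) := by
    apply Finset.filter_congr
    intro σ _
    have hfe : (S.filter fun t => σ t ∈ CC)
        = S.filter (fun t =>
            m / 2 + (k - 1) * (m / (2 * κ)) ≤ (σ t : ℕ) ∧
              (σ t : ℕ) < m / 2 + k * (m / (2 * κ))) := by
      apply Finset.filter_congr
      intro t _
      simp [hCCdef, hLdef, hRdef, hqdef]
    rw [hfe, hμ, ← mul_div_assoc]
  rw [hsets] at ht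
  refine ht.trans (le_of_eq ?_)
  have harg : -δ^2 * ((S.card:ℝ) * (CC.card : ℝ) / (m:ℝ))/3
      = -(δ^2 * (S.card:ℝ))/(6 * (κ:ℝ)) := by
    rw [hμ]; ring
  rw [harg]; ring




/-- Good permutation lemma: For `m, κ` positive with `2κ ∣ m`,
`δ ∈ (0,1]`, and `A, B ⊆ Fin m` with `A ∩ B` nonempty, a uniformly random
permutation `σ` of `Fin m` is "good" — meaning the number of elements of `A`
(resp. `B`) landing in the first half `H = {t : t < m/2}` is within `δ·|A|/2` of
`|A|/2` (resp. within `δ·|B|/2` of `|B|/2`), and for every `k ∈ {1,…,κ}` the number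
of elements of `A ∩ B` landing in the k-th chunk
`C_k = {t : m/2 + (k−1)·m/(2κ) ≤ t < m/2 + k·m/(2κ)}` is within `δ·|A∩B|/(2κ)` of
`|A∩B|/(2κ)` — with probability at least
`1 − 2·exp(−δ²·|A|/6) − 2·exp(−δ²·|B|/6) − 2κ·exp(−δ²·|A∩B|/(6κ))`. -/
theorem stmt_2 (m κ : ℕ) (hm : 0 < m) (hκ : 0 < κ) (hdiv : 2 * κ ∣ m)
    (δ : ℝ) (hδ0 : 0 < δ) (hδ1 : δ ≤ 1)
    (A B : Finset (Fin m)) (hAB : (A ∩ B).Nonempty) :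
    1 - 2 * Real.exp (-(δ ^ 2 * (A.card : ℝ)) / 6)
      - 2 * Real.exp (-(δ ^ 2 * (B.card : ℝ)) / 6)
      - 2 * (κ : ℝ) * Real.exp (-(δ ^ 2 * ((A ∩ B).card : ℝ)) / (6 * κ))
    ≤ ((Finset.univ.filter (fun σ : Equiv.Perm (Fin m) =>
          |((A.filter (fun t => ((σ t : ℕ) < m / 2))).card : ℝ) - (A.card : ℝ) / 2|
              ≤ δ * (A.card : ℝ) / 2 ∧
          |((B.filter (fun t => ((σ t : ℕ) < m / 2))).card : ℝ) - (B.card : ℝ) / 2|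
              ≤ δ * (B.card : ℝ) / 2 ∧
          ∀ k ∈ Finset.Icc 1 κ,
            |(((A ∩ B).filter (fun t =>
                m / 2 + (k - 1) * (m / (2 * κ)) ≤ (σ t : ℕ) ∧
                  (σ t : ℕ) < m / 2 + k * (m / (2 * κ)))).card : ℝ)
              - ((A ∩ B).card : ℝ) / (2 * κ)|
              ≤ δ * ((A ∩ B).card : ℝ) / (2 * κ))).card : ℝ)
      / (Fintype.card (Equiv.Perm (Fin m)) : ℝ) := by
  have hm2 : 2 ∣ m := dvd_trans ⟨κ, rfl⟩ hdiv
  set P1 : Perm (Fin m) → Prop := fun σ =>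
    |((A.filter (fun t => ((σ t : ℕ) < m / 2))).card : ℝ) - (A.card : ℝ) / 2|
        ≤ δ * (A.card : ℝ) / 2 with hP1
  set P2 : Perm (Fin m) → Prop := fun σ =>
    |((B.filter (fun t => ((σ t : ℕ) < m / 2))).card : ℝ) - (B.card : ℝ) / 2|
        ≤ δ * (B.card : ℝ) / 2 with hP2
  set Q : ℕ → Perm (Fin m) → Prop := fun k σ =>
    |(((A ∩ B).filter (fun t =>
        m / 2 + (k - 1) * (m / (2 * κ)) ≤ (σ t : ℕ) ∧
          (σ t : ℕ) < m / 2 + k * (m / (2 * κ)))).card : ℝ)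
      - ((A ∩ B).card : ℝ) / (2 * κ)|
      ≤ δ * ((A ∩ B).card : ℝ) / (2 * κ) with hQ
  set G : Finset (Perm (Fin m)) :=
    univ.filter (fun σ => P1 σ ∧ P2 σ ∧ ∀ k ∈ Finset.Icc 1 κ, Q k σ) with hG
  set D : Finset (Perm (Fin m)) :=
    univ.filter (fun σ => ¬ (P1 σ ∧ P2 σ ∧ ∀ k ∈ Finset.Icc 1 κ, Q k σ)) with hD
  have hGD : G.card + D.card = Nat.factorial m := by
    rw [hG, hD, Finset.card_filter_add_card_filter_not, Finset.card_univ,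
      Fintype.card_perm, Fintype.card_fin]
  have hDsub : D ⊆ (univ.filter fun σ => ¬ P1 σ) ∪ (univ.filter fun σ => ¬ P2 σ)
      ∪ (univ.filter fun σ => ¬ ∀ k ∈ Finset.Icc 1 κ, Q k σ) := by
    intro σ hσ
    simp only [hD, Finset.mem_filter, Finset.mem_univ, true_and] at hσ
    simp only [Finset.mem_union, Finset.mem_filter, Finset.mem_univ, true_and]
    tauto
  have hDcard : D.card ≤ (univ.filter fun σ => ¬ P1 σ).card
      + (univ.filter fun σ => ¬ P2 σ).card
      + (univ.filter fun σ => ¬ ∀ k ∈ Finset.Icc 1 κ, Q k σ).card := by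
    refine (Finset.card_le_card hDsub).trans ?_
    refine (Finset.card_union_le _ _).trans ?_
    exact Nat.add_le_add_right (Finset.card_union_le _ _) _
  -- bound the third component
  have hQsub : (univ.filter fun σ => ¬ ∀ k ∈ Finset.Icc 1 κ, Q k σ)
      ⊆ (Finset.Icc 1 κ).biUnion (fun k => univ.filter (fun σ => ¬ Q k σ)) := by
    intro σ hσ
    simp only [Finset.mem_filter, Finset.mem_univ, true_and] at hσ
    push_neg at hσ
    obtain ⟨k, hk, hQk⟩ := hσ
    rw [Finset.mem_biUnion]
    exact ⟨k, hk, by simp only [Finset.mem_filter, Finset.mem_univ, true_and]; exact hQk⟩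
  have hQcard : ((univ.filter fun σ => ¬ ∀ k ∈ Finset.Icc 1 κ, Q k σ).card : ℝ)
      ≤ (κ : ℝ) * ((Nat.factorial m : ℝ)
          * (2 * Real.exp (-(δ ^ 2 * ((A ∩ B).card : ℝ)) / (6 * κ)))) := by
    have h1 : (univ.filter fun σ => ¬ ∀ k ∈ Finset.Icc 1 κ, Q k σ).card
        ≤ ∑ k ∈ Finset.Icc 1 κ, (univ.filter (fun σ => ¬ Q k σ)).card :=
      (Finset.card_le_card hQsub).trans (Finset.card_biUnion_le)
    have h2 : (∑ k ∈ Finset.Icc 1 κ, ((univ.filter (fun σ => ¬ Q k σ)).card : ℝ))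
        ≤ ∑ _k ∈ Finset.Icc 1 κ, ((Nat.factorial m : ℝ)
            * (2 * Real.exp (-(δ ^ 2 * ((A ∩ B).card : ℝ)) / (6 * κ)))) := by
      apply Finset.sum_le_sum
      intro k hk
      rw [Finset.mem_Icc] at hk
      simp only [hQ]
      exact eventC_bound m κ k hm hκ hdiv hk.1 hk.2 δ hδ0 hδ1 (A ∩ B)
    rw [Finset.sum_const, Nat.card_Icc, nsmul_eq_mul] at h2
    simp only [Nat.add_sub_cancel] at h2
    calc ((univ.filter fun σ => ¬ ∀ k ∈ Finset.Icc 1 κ, Q k σ).card : ℝ)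
        ≤ ∑ k ∈ Finset.Icc 1 κ, ((univ.filter (fun σ => ¬ Q k σ)).card : ℝ) := by
          exact_mod_cast h1
      _ ≤ _ := h2
  have hbA : ((univ.filter fun σ => ¬ P1 σ).card : ℝ)
      ≤ (Nat.factorial m : ℝ) * (2 * Real.exp (-(δ ^ 2 * (A.card : ℝ)) / 6)) := by
    simp only [hP1]
    exact eventH_bound m hm hm2 δ hδ0 hδ1 A
  have hbB : ((univ.filter fun σ => ¬ P2 σ).card : ℝ)
      ≤ (Nat.factorial m : ℝ) * (2 * Real.exp (-(δ ^ 2 * (B.card : ℝ)) / 6)) := by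
    simp only [hP2]
    exact eventH_bound m hm hm2 δ hδ0 hδ1 B
  -- final arithmetic
  rw [show ((Fintype.card (Equiv.Perm (Fin m)) : ℕ) : ℝ) = (Nat.factorial m : ℝ) by
    rw [Fintype.card_perm, Fintype.card_fin]]
  have hFpos : (0:ℝ) < (Nat.factorial m : ℝ) := by exact_mod_cast Nat.factorial_pos m
  rw [le_div_iff₀ hFpos]
  have hGcast : (G.card : ℝ) + (D.card : ℝ) = (Nat.factorial m : ℝ) := by
    exact_mod_cast hGD
  have hDcast : (D.card : ℝ) ≤ ((univ.filter fun σ => ¬ P1 σ).card : ℝ)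
      + ((univ.filter fun σ => ¬ P2 σ).card : ℝ)
      + ((univ.filter fun σ => ¬ ∀ k ∈ Finset.Icc 1 κ, Q k σ).card : ℝ) := by
    exact_mod_cast hDcard
  nlinarith [hbA, hbB, hQcard, hGcast, hDcast]
end Tails
end

section
/- (Correctness of reservoir sampling.) Let s ≤ n be positive integers. Define a sequence of probability distributions μ_t on s-element subsets of {1,…,t}, for t = s, s+1, …, n, as follows: μ_s is the point mass on the set {1,…,s}; and μ_{t+1} is obtained from μ_t by the following random transition applied to a subset R drawn from μ_t: with probability s/(t+1), choose an element v of R uniformly at random and replace R by (R \ {v}) ∪ {t+1}; otherwise (with probability 1 − s/(t+1)) keep R unchanged. Then μ_n is the uniform distribution on the collection of all s-element subsets of {1,…,n}: every s-element subset of {1,…,n} has probability 1/C(n,s) under μ_n. -/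
/-- The one-step transition probability of reservoir sampling with reservoir size `s`,
going from time `t` to time `t+1`: from the current reservoir `R'` (an `s`-element
subset of `{1,…,t}`), with probability `s/(t+1)` a uniformly random element `v ∈ R'`
is replaced by the new element `t+1` (each concrete `v` thus contributes probability
`(s/(t+1))·(1/s) = 1/(t+1)`), and otherwise (with probability `1 − s/(t+1)`) the
reservoir stays unchanged.  `resStep s t R' R` is the probability of moving from
`R'` to `R`. -/
noncomputable def resStep (s t : ℕ) (R' R : Finset ℕ) : ℝ :=
  (if R = R' then 1 - (s : ℝ) / ((t : ℝ) + 1) else 0)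
    + ((s : ℝ) / ((t : ℝ) + 1)) *
        (((R'.filter (fun v => insert (t + 1) (R'.erase v) = R)).card : ℝ) / (s : ℝ))

/-- The distribution `μ_{s+j}` of the reservoir after processing items `1,…,s+j`:
`resDist s j R` is the probability that the reservoir equals `R` at time `t = s + j`.
At time `t = s` (i.e. `j = 0`) it is the point mass on `{1,…,s}`, and `μ_{t+1}` is
obtained from `μ_t` by applying the transition kernel `resStep`. -/
noncomputable def resDist (s : ℕ) : ℕ → Finset ℕ → ℝ
  | 0, R => if R = Finset.Icc 1 s then 1 else 0
  | j + 1, R =>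
      ∑ R' ∈ (Finset.Icc 1 (s + j)).powersetCard s, resDist s j R' * resStep s (s + j) R' R

open Finset

/-- Counting pairs `(R', v)` with `v ∈ R'` and `(R' \ {v}) ∪ {t+1} = R`:
there are exactly `t + 1 - s` of them, one for each `v ∈ {1,…,t} \ (R \ {t+1})`. -/
lemma count_lemma (s t : ℕ) (hs : 0 < s) (R : Finset ℕ)
    (hRsub : R ⊆ Finset.Icc 1 (t+1)) (hcard : R.card = s) (hmem : t+1 ∈ R) :
    ∑ R' ∈ (Finset.Icc 1 t).powersetCard s,
      ((R'.filter (fun v => insert (t + 1) (R'.erase v) = R)).card) = t + 1 - s := by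
  classical
  set R₀ := R.erase (t+1) with hR₀
  have hR₀sub : R₀ ⊆ Finset.Icc 1 t := by
    intro x hx
    have hx' : x ∈ R := mem_of_mem_erase hx
    have hne : x ≠ t+1 := ne_of_mem_erase hx
    have := hRsub hx'
    simp only [mem_Icc] at this ⊢
    omega
  have hR₀card : R₀.card = s - 1 := by rw [hR₀, card_erase_of_mem hmem, hcard]
  have hkey : ∀ R' ∈ (Finset.Icc 1 t).powersetCard s, ∀ v ∈ R',
      (insert (t + 1) (R'.erase v) = R) ↔ R'.erase v = R₀ := by
    intro R' hR' v hv
    rw [mem_powersetCard] at hR'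
    have hnot : (t+1) ∉ R'.erase v := by
      intro h
      have := hR'.1 (mem_of_mem_erase h)
      simp [mem_Icc] at this
    constructor
    · intro h
      rw [hR₀, ← h, erase_insert hnot]
    · intro h
      rw [h, hR₀, insert_erase hmem]
  rw [← Finset.card_sigma]
  rw [show t + 1 - s = (Finset.Icc 1 t \ R₀).card by
    rw [card_sdiff_of_subset hR₀sub, hR₀card, Nat.card_Icc]; omega]
  apply Finset.card_bij (fun p _ => p.2)
  · rintro ⟨R', v⟩ hp
    rw [Finset.mem_sigma] at hp
    obtain ⟨hR', hv⟩ := hp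
    rw [mem_filter] at hv
    have heq : R'.erase v = R₀ := (hkey R' hR' v hv.1).mp hv.2
    rw [mem_powersetCard] at hR'
    rw [mem_sdiff]
    exact ⟨hR'.1 hv.1, heq ▸ notMem_erase v R'⟩
  · rintro ⟨R', v⟩ hp ⟨R'', v'⟩ hq h
    simp only at h
    rw [Finset.mem_sigma] at hp hq
    obtain ⟨hR', hv⟩ := hp
    obtain ⟨hR'', hv'⟩ := hq
    dsimp only at hR' hv hR'' hv' h
    rw [mem_filter] at hv hv'
    have heq : R'.erase v = R₀ := (hkey R' hR' v hv.1).mp hv.2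
    have heq' : R''.erase v' = R₀ := (hkey R'' hR'' v' hv'.1).mp hv'.2
    have : R' = R'' := by
      rw [← insert_erase hv.1, ← insert_erase hv'.1, heq, heq', h]
    subst this
    subst h
    rfl
  · intro v hv
    rw [mem_sdiff] at hv
    obtain ⟨hv1, hv2⟩ := hv
    refine ⟨⟨insert v R₀, v⟩, ?_, rfl⟩
    rw [Finset.mem_sigma]
    have hmem' : insert v R₀ ∈ (Finset.Icc 1 t).powersetCard s := by
      rw [mem_powersetCard]
      constructor
      · exact insert_subset hv1 hR₀sub
      · rw [card_insert_of_notMem hv2, hR₀card]; omega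
    refine ⟨hmem', ?_⟩
    rw [mem_filter]
    refine ⟨mem_insert_self _ _, ?_⟩
    rw [hkey _ hmem' v (mem_insert_self _ _), erase_insert hv2]

/-- The total probability, under the kernel `resStep`, of arriving at a fixed
`s`-element subset `R ⊆ {1,…,t+1}` from the various `R' ⊆ {1,…,t}` is
`(t+1-s)/(t+1)`. -/
lemma sum_resStep (s t : ℕ) (hs : 0 < s) (hst : s ≤ t) (R : Finset ℕ)
    (hR : R ∈ (Finset.Icc 1 (t+1)).powersetCard s) :
    ∑ R' ∈ (Finset.Icc 1 t).powersetCard s, resStep s t R' R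
      = ((t + 1 - s : ℕ) : ℝ) / ((t : ℝ) + 1) := by
  classical
  rw [mem_powersetCard] at hR
  obtain ⟨hRsub, hcard⟩ := hR
  have ht1 : ((t : ℝ) + 1) ≠ 0 := by positivity
  have hs' : (s : ℝ) ≠ 0 := Nat.cast_ne_zero.mpr hs.ne'
  by_cases hmem : t + 1 ∈ R
  · -- R contains t+1, so R ≠ R' for all R' ⊆ Icc 1 t
    have hstep : ∀ R' ∈ (Finset.Icc 1 t).powersetCard s,
        resStep s t R' R =
          ((R'.filter (fun v => insert (t + 1) (R'.erase v) = R)).card : ℝ) / ((t : ℝ) + 1) := by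
      intro R' hR'
      rw [mem_powersetCard] at hR'
      have hne : R ≠ R' := by
        intro h
        have := hR'.1 (h ▸ hmem)
        simp [mem_Icc] at this
      rw [resStep, if_neg hne]
      field_simp
      ring
    rw [Finset.sum_congr rfl hstep, ← Finset.sum_div, ← Nat.cast_sum,
      count_lemma s t hs R hRsub hcard hmem]
  · -- t+1 ∉ R : the replacement term never fires, only R' = R contributes
    have hRsub' : R ⊆ Finset.Icc 1 t := by
      intro x hx
      have hx1 := hRsub hx
      have : x ≠ t + 1 := fun h => hmem (h ▸ hx)
      simp only [mem_Icc] at hx1 ⊢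
      omega
    have hfilter : ∀ R' : Finset ℕ,
        (R'.filter (fun v => insert (t + 1) (R'.erase v) = R)) = ∅ := by
      intro R'
      apply filter_eq_empty_iff.mpr
      intro v _ h
      exact hmem (h ▸ mem_insert_self _ _)
    have hstep : ∀ R' ∈ (Finset.Icc 1 t).powersetCard s,
        resStep s t R' R = if R' = R then 1 - (s : ℝ) / ((t : ℝ) + 1) else 0 := by
      intro R' _
      rw [resStep, hfilter]
      simp [eq_comm]
    rw [Finset.sum_congr rfl hstep, Finset.sum_ite_eq' _ R]
    rw [if_pos (mem_powersetCard.mpr ⟨hRsub', hcard⟩)]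
    have : ((t + 1 - s : ℕ) : ℝ) = (t : ℝ) + 1 - s := by
      push_cast [Nat.cast_sub (by omega : s ≤ t + 1)]; ring
    rw [this]
    field_simp

/-- The binomial identity `(t+1)·C(t,s) = C(t+1,s)·(t+1-s)`. -/
lemma choose_id (s t : ℕ) (hst : s ≤ t) :
    (t + 1) * t.choose s = (t + 1).choose s * (t + 1 - s) := by
  have h1 : t.choose (t - s) = t.choose s := Nat.choose_symm hst
  have h2 : (t + 1).choose (t - s + 1) = (t + 1).choose s := by
    rw [show t - s + 1 = t + 1 - s by omega]
    exact Nat.choose_symm (by omega)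
  have := Nat.add_one_mul_choose_eq t (t - s)
  rw [← h1, this, h2.symm]
  congr 1
  omega

/-- The reservoir distribution at each time `s + j` is uniform on the
`s`-element subsets of `{1,…,s+j}`. -/
lemma resDist_uniform (s : ℕ) (hs : 0 < s) : ∀ j : ℕ, ∀ R : Finset ℕ,
    R ∈ (Finset.Icc 1 (s + j)).powersetCard s →
    resDist s j R = 1 / ((s + j).choose s : ℝ) := by
  intro j
  induction j with
  | zero =>
    intro R hR
    rw [mem_powersetCard] at hR
    have hcard : (Finset.Icc 1 s).card = s := by rw [Nat.card_Icc]; omega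
    have : R = Finset.Icc 1 s := eq_of_subset_of_card_le hR.1 (by omega)
    simp [resDist, this]
  | succ j ih =>
    intro R hR
    set t := s + j with ht
    have hst : s ≤ t := by omega
    rw [resDist]
    have hR' : R ∈ (Finset.Icc 1 (t + 1)).powersetCard s := by
      rwa [show s + (j + 1) = t + 1 by omega] at hR
    rw [Finset.sum_congr rfl (fun R' hR'' => by rw [ih R' hR''])]
    rw [← Finset.mul_sum, sum_resStep s t hs hst R hR']
    have hC : (t.choose s : ℝ) ≠ 0 := Nat.cast_ne_zero.mpr (Nat.choose_pos hst).ne'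
    have hC1 : ((t + 1).choose s : ℝ) ≠ 0 :=
      Nat.cast_ne_zero.mpr (Nat.choose_pos (by omega)).ne'
    have ht1 : ((t : ℝ) + 1) ≠ 0 := by positivity
    have hid := choose_id s t hst
    have hid' : ((t : ℝ) + 1) * (t.choose s : ℝ)
        = ((t + 1).choose s : ℝ) * ((t + 1 - s : ℕ) : ℝ) := by
      exact_mod_cast congrArg (Nat.cast : ℕ → ℝ) hid
    rw [show s + (j + 1) = t + 1 by omega]
    field_simp
    push_cast at hid' ⊢
    linarith [hid']

/-- Correctness of reservoir sampling: for positive integers `s ≤ n`,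
the reservoir distribution at time `n` is uniform on the `s`-element subsets of
`{1,…,n}`: every `s`-element subset `R ⊆ {1,…,n}` has probability `1/C(n,s)`. -/
theorem stmt_5 (s n : ℕ) (hs : 0 < s) (hsn : s ≤ n)
    (R : Finset ℕ) (hR : R ∈ (Finset.Icc 1 n).powersetCard s) :
    resDist s (n - s) R = 1 / (n.choose s : ℝ) := by
  have hn : s + (n - s) = n := by omega
  have := resDist_uniform s hs (n - s) R (by rwa [hn])
  rwa [hn] at this
end

section
/- (First-phase construction in the lower-bound proof.) Let k ≥ 2, M ≥ 1 and φ ≥ 1 be integers, let F be a finite set of items with k−1 ≤ |F| and |F|·φ ≤ M·(k−1), and let x be an item with x ∉ F. Then there exist sets T_1, …, T_M with the following properties: each T_t ⊆ F ∪ {x}, each |T_t| = k, x ∈ T_t for every t (so in particular no T_t is a subset of F, and hence no k-element subset of F is contained in any T_t), and every item i ∈ F belongs to at least φ of the sets T_1, …, T_M. -/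
/-- First-phase construction in the lower-bound proof: Let `k ≥ 2`,
`M ≥ 1`, `φ ≥ 1` be integers, `F` a finite set of items with `k−1 ≤ |F|` and
`|F|·φ ≤ M·(k−1)`, and `x ∉ F`.  Then there exist transactions `T_1, …, T_M`
(indexed by `Fin M`) such that each `T_t ⊆ F ∪ {x}`, each `|T_t| = k`, `x ∈ T_t` for
every `t` (so in particular no `T_t` is a subset of `F`, and hence no `k`-element
subset of `F` is contained in any `T_t`), and every item `i ∈ F` belongs to at least
`φ` of the transactions. -/
theorem stmt_9 {α : Type*} [DecidableEq α] (k M φ : ℕ)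
    (hk : 2 ≤ k) (hM : 1 ≤ M) (hφ : 1 ≤ φ)
    (F : Finset α) (hF : k - 1 ≤ F.card) (hFφ : F.card * φ ≤ M * (k - 1))
    (x : α) (hx : x ∉ F) :
    ∃ T : Fin M → Finset α,
      (∀ t, T t ⊆ insert x F) ∧
      (∀ t, (T t).card = k) ∧
      (∀ t, x ∈ T t) ∧
      (∀ t, ¬ T t ⊆ F) ∧
      (∀ G : Finset α, G ⊆ F → G.card = k → ∀ t, ¬ G ⊆ T t) ∧
      (∀ i ∈ F, φ ≤ (Finset.univ.filter (fun t => i ∈ T t)).card) := by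
  set n := F.card with hn
  set r := k - 1 with hr
  have hr1 : 1 ≤ r := by omega
  have hrn : r ≤ n := hF
  have hn1 : 0 < n := lt_of_lt_of_le hr1 hrn
  set e := F.equivFin with he
  set f : ℕ → α := fun m => ((e.symm ⟨m % n, Nat.mod_lt m hn1⟩ : F) : α) with hf
  have hfF : ∀ m, f m ∈ F := fun m => (e.symm _).2
  have hfinj : ∀ m1 m2 : ℕ, f m1 = f m2 → m1 % n = m2 % n := by
    intro m1 m2 h
    have h2 := e.symm.injective (Subtype.coe_injective h)
    exact congrArg Fin.val h2
  set S : Fin M → Finset α := fun t => (Finset.range r).image (fun j => f (t.1 * r + j))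
    with hS
  have hSsub : ∀ t, S t ⊆ F := by
    intro t a ha
    simp only [hS, Finset.mem_image] at ha
    obtain ⟨j, _, rfl⟩ := ha
    exact hfF _
  have hScard : ∀ t, (S t).card = r := by
    intro t
    rw [hS]
    rw [Finset.card_image_of_injOn, Finset.card_range]
    intro j1 hj1 j2 hj2 hj
    simp only [Finset.coe_range, Set.mem_Iio] at hj1 hj2
    have hmod := hfinj _ _ hj
    have h1 : j1 % n = j2 % n := Nat.ModEq.add_left_cancel' (t.1 * r) hmod
    rwa [Nat.mod_eq_of_lt (lt_of_lt_of_le hj1 hrn),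
      Nat.mod_eq_of_lt (lt_of_lt_of_le hj2 hrn)] at h1
  refine ⟨fun t => insert x (S t), ?_, ?_, ?_, ?_, ?_, ?_⟩
  · intro t
    exact Finset.insert_subset_insert x (hSsub t)
  · intro t
    rw [Finset.card_insert_of_notMem (fun h => hx (hSsub t h)), hScard]
    omega
  · intro t; exact Finset.mem_insert_self x _
  · intro t h
    exact hx (h (Finset.mem_insert_self x _))
  · intro G hGF hGk t hGT
    have hxG : x ∉ G := fun h => hx (hGF h)
    have hGS : G ⊆ S t := fun a ha => by
      rcases Finset.mem_insert.mp (hGT ha) with h | h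
      · exact absurd (h ▸ ha) hxG
      · exact h
    have := Finset.card_le_card hGS
    rw [hGk, hScard] at this
    omega
  · intro i hi
    set c := (e ⟨i, hi⟩).1 with hc
    have hcn : c < n := (e ⟨i, hi⟩).2
    set g : Fin φ → Fin M := fun s =>
      ⟨(c + s.1 * n) / r, by
        apply Nat.div_lt_iff_lt_mul (by omega) |>.mpr
        calc c + s.1 * n < n + s.1 * n := by omega
          _ = (s.1 + 1) * n := by ring
          _ ≤ φ * n := Nat.mul_le_mul_right n s.2
          _ = n * φ := Nat.mul_comm _ _
          _ ≤ M * r := hFφ⟩ with hg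
    have hmem : ∀ s : Fin φ, i ∈ S (g s) := by
      intro s
      simp only [hS, Finset.mem_image, Finset.mem_range]
      refine ⟨(c + s.1 * n) % r, Nat.mod_lt _ (by omega), ?_⟩
      have hrec : (g s).1 * r + (c + s.1 * n) % r = c + s.1 * n := by
        simp only [hg]
        exact Nat.div_add_mod' _ _
      rw [hrec]
      have hmod : (c + s.1 * n) % n = c := by
        rw [Nat.add_mul_mod_self_right, Nat.mod_eq_of_lt hcn]
      have hfin : (⟨(c + s.1 * n) % n, Nat.mod_lt _ hn1⟩ : Fin n) = e ⟨i, hi⟩ := by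
        apply Fin.ext
        show (c + s.1 * n) % n = ((e ⟨i, hi⟩ : Fin n) : ℕ)
        rw [hmod]
      show ((e.symm ⟨(c + s.1 * n) % n, Nat.mod_lt _ hn1⟩ : F) : α) = i
      have := congrArg (fun z => ((e.symm z : F) : α)) hfin
      simpa using this
    have key : ∀ s1 s2 : Fin φ, s1.1 < s2.1 → g s1 = g s2 → False := by
      intro s1 s2 hlt h12
      set m1 := c + s1.1 * n with hm1
      set m2 := c + s2.1 * n with hm2
      have hq : m1 / r = m2 / r := by
        have := congrArg Fin.val h12
        simpa [hg] using this
      have h1 : m1 / r * r ≤ m1 := Nat.div_mul_le_self _ _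
      have h2 : m2 < m2 / r * r + r := by
        conv_lhs => rw [← Nat.div_add_mod' m2 r]
        exact Nat.add_lt_add_left (Nat.mod_lt _ (by omega)) _
      have hd : m1 + n ≤ m2 := by
        have hnle : n ≤ (s2.1 - s1.1) * n := Nat.le_mul_of_pos_left n (by omega)
        have h' : m2 = m1 + (s2.1 - s1.1) * n := by
          rw [hm1, hm2, Nat.add_assoc, ← Nat.add_mul]
          congr 2
          omega
        omega
      rw [← hq] at h2
      have : m2 < m1 + n := by
        calc m2 < m1 / r * r + r := h2
          _ ≤ m1 + r := by omega
          _ ≤ m1 + n := by omega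
      omega
    have hginj : Function.Injective g := by
      intro s1 s2 h12
      rcases lt_trichotomy s1.1 s2.1 with h | h | h
      · exact (key s1 s2 h h12).elim
      · exact Fin.ext h
      · exact (key s2 s1 h h12.symm).elim
    have hle : (Finset.univ : Finset (Fin φ)).card ≤
        (Finset.univ.filter (fun t => i ∈ insert x (S t))).card :=
      Finset.card_le_card_of_injOn g
        (fun s _ => Finset.mem_filter.mpr ⟨Finset.mem_univ _,
          Finset.mem_insert_of_mem (hmem s)⟩)
        (fun a _ b _ h => hginj h)
    simpa using hle
end
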